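/- arXiv:2207.09401 — 3 statements merged into one kernel-verified Lean document; each statement's English description precedes it below -/
import Mathlib

section
/- Let d ≥ 2, p ≥ 2, D a bounded subset of R^d, and D_ε = D/ε ∩ Z^d. Then ∑ over pairwise distinct v₁,...,v_p ∈ D_ε of (∏_{i=1}^{p-1} |v_i - v_{i+1}|^{-d}) · |v_p - v₁|^{-d} is O(ε^{-p/2 - d + 1}) as ε → 0, with implied constant depending on D, d and p. -/
open scoped Classical

open Finset

private def gsnsup {d : ℕ} (u : Fin d → ℤ) : ℕ := Finset.univ.sup fun m => (u m).natAbs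

private lemma gsnsup_pos {d : ℕ} {u : Fin d → ℤ} (hu : u ≠ 0) : 1 ≤ gsnsup u := by
  obtain ⟨m, hm⟩ := Function.ne_iff.mp hu
  calc 1 ≤ (u m).natAbs := Int.natAbs_pos.mpr hm
  _ ≤ gsnsup u := Finset.le_sup (f := fun m => (u m).natAbs) (mem_univ m)

private lemma gsnsup_le_sqrt {d : ℕ} (hd : 1 ≤ d) (u : Fin d → ℤ) :
    (gsnsup u : ℝ) ≤ Real.sqrt (∑ m, ((u m : ℝ))^2) := by
  have : Nonempty (Fin d) := ⟨⟨0, hd⟩⟩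
  obtain ⟨m, -, hm⟩ := Finset.exists_mem_eq_sup (Finset.univ : Finset (Fin d))
    univ_nonempty (fun m => (u m).natAbs)
  rw [gsnsup, hm]
  have h1 : ((u m).natAbs : ℝ) = |(u m : ℝ)| := by
    rw [Nat.cast_natAbs]; push_cast; rfl
  rw [h1, ← Real.sqrt_sq_eq_abs]
  apply Real.sqrt_le_sqrt
  exact Finset.single_le_sum (f := fun m => ((u m : ℝ))^2)
    (fun i _ => sq_nonneg _) (mem_univ m)

private lemma gs_shell_card {d : ℕ} (hd : 1 ≤ d) {k : ℕ} (hk : 1 ≤ k)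
    (U : Finset (Fin d → ℤ)) (hU : ∀ u ∈ U, gsnsup u = k) :
    (U.card : ℝ) ≤ (2*d) * (3*k)^(d-1) := by
  set B : Fin d → Finset (Fin d → ℤ) := fun m => Fintype.piFinset
    (fun j => if j = m then ({(k : ℤ), -(k : ℤ)} : Finset ℤ) else Finset.Icc (-(k:ℤ)) k) with hB
  have hsub : U ⊆ Finset.univ.biUnion B := by
    intro u hu
    have hns := hU u hu
    have : Nonempty (Fin d) := ⟨⟨0, hd⟩⟩
    obtain ⟨m, -, hm⟩ := Finset.exists_mem_eq_sup (Finset.univ : Finset (Fin d))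
      univ_nonempty (fun m => (u m).natAbs)
    rw [gsnsup] at hns
    refine Finset.mem_biUnion.mpr ⟨m, mem_univ m, ?_⟩
    rw [hB, Fintype.mem_piFinset]
    intro j
    by_cases hj : j = m
    · subst hj
      rw [if_pos rfl, Finset.mem_insert, Finset.mem_singleton]
      have : (u j).natAbs = k := by rw [← hm, ← hns]
      exact Int.natAbs_eq_iff.mp this
    · rw [if_neg hj]
      have h1 : (u j).natAbs ≤ k := by
        rw [← hns]; exact Finset.le_sup (f := fun m => (u m).natAbs) (mem_univ j)
      have h2 : |u j| ≤ (k : ℤ) := by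
        rw [Int.abs_eq_natAbs]; exact_mod_cast h1
      rw [Finset.mem_Icc]
      constructor <;> [linarith [neg_abs_le (u j)]; linarith [le_abs_self (u j)]]
  have hcount : ∀ m, (B m).card = 2 * (2*k+1)^(d-1) := by
    intro m
    rw [hB]
    rw [Fintype.card_piFinset]
    have hprod : ∀ j : Fin d,
        ((if j = m then ({(k : ℤ), -(k : ℤ)} : Finset ℤ) else Finset.Icc (-(k:ℤ)) k)).card
        = if j = m then 2 else (2*k+1) := by
      intro j
      by_cases hj : j = m
      · rw [if_pos hj, if_pos hj]
        rw [Finset.card_insert_of_notMem, Finset.card_singleton]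
        simp only [Finset.mem_singleton]
        intro h
        have : (k : ℤ) = 0 := by linarith [h]
        omega
      · rw [if_neg hj, if_neg hj, Int.card_Icc]
        have : (k : ℤ) + 1 - -(k:ℤ) = ((2*k+1 : ℕ) : ℤ) := by push_cast; ring
        rw [this, Int.toNat_natCast]
    calc (∏ j : Fin d, ((if j = m then ({(k : ℤ), -(k : ℤ)} : Finset ℤ)
          else Finset.Icc (-(k:ℤ)) k)).card)
        = ∏ j : Fin d, (if j = m then 2 else (2*k+1)) := by
          exact Finset.prod_congr rfl (fun j _ => hprod j)
      _ = 2 * (2*k+1)^(d-1) := by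
          rw [← Finset.mul_prod_erase Finset.univ _ (mem_univ m), if_pos rfl]
          congr 1
          rw [Finset.prod_congr rfl (fun j hj => if_neg (Finset.ne_of_mem_erase hj)),
            Finset.prod_const, Finset.card_erase_of_mem (mem_univ m), Finset.card_univ,
            Fintype.card_fin]
  have hcard : U.card ≤ d * (2 * (2*k+1)^(d-1)) := by
    calc U.card ≤ (Finset.univ.biUnion B).card := Finset.card_le_card hsub
      _ ≤ ∑ m : Fin d, (B m).card := Finset.card_biUnion_le
      _ = ∑ _m : Fin d, 2 * (2*k+1)^(d-1) := Finset.sum_congr rfl (fun m _ => hcount m)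
      _ = d * (2 * (2*k+1)^(d-1)) := by rw [Finset.sum_const, Finset.card_univ,
          Fintype.card_fin, smul_eq_mul]
  have hk' : (1:ℝ) ≤ (k:ℝ) := by exact_mod_cast hk
  have hc : (U.card : ℝ) ≤ (d:ℝ) * (2 * ((2*(k:ℝ)+1))^(d-1)) := by exact_mod_cast hcard
  have hp : ((2*(k:ℝ)+1))^(d-1) ≤ (3*(k:ℝ))^(d-1) :=
    pow_le_pow_left₀ (by positivity) (by linarith) _
  calc (U.card:ℝ) ≤ (d:ℝ)*(2*((2*(k:ℝ)+1))^(d-1)) := hc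
    _ ≤ (d:ℝ)*(2*((3*(k:ℝ)))^(d-1)) := by gcongr
    _ = 2*(d:ℝ)*(3*(k:ℝ))^(d-1) := by ring

private lemma gs_lattice_sum {d : ℕ} (hd : 1 ≤ d) {e : ℝ} (he : (d:ℝ) < e) :
    ∃ C₀ : ℝ, 0 < C₀ ∧ ∀ U : Finset (Fin d → ℤ), (0 : Fin d → ℤ) ∉ U →
      ∑ u ∈ U, Real.sqrt (∑ m, ((u m : ℝ))^2) ^ (-e) ≤ C₀ := by
  have hd1 : (1:ℝ) ≤ (d:ℝ) := by exact_mod_cast hd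
  have hsum : Summable (fun n : ℕ => (n:ℝ) ^ ((d:ℝ) - 1 - e)) :=
    Real.summable_nat_rpow.mpr (by linarith)
  set C₁ := ∑' n : ℕ, (n:ℝ) ^ ((d:ℝ) - 1 - e) with hC₁
  have hC₁0 : 0 ≤ C₁ := tsum_nonneg (fun n => Real.rpow_nonneg (Nat.cast_nonneg n) _)
  set A : ℝ := (2*d) * 3^(d-1) with hA
  have hA0 : 0 < A := by positivity
  refine ⟨A * C₁ + 1, by positivity, ?_⟩
  intro U hU0
  have hne : ∀ u ∈ U, u ≠ 0 := fun u hu h => hU0 (h ▸ hu)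
  have step1 : ∑ u ∈ U, Real.sqrt (∑ m, ((u m : ℝ))^2) ^ (-e)
      ≤ ∑ u ∈ U, ((gsnsup u : ℝ)) ^ (-e) := by
    apply Finset.sum_le_sum
    intro u hu
    have h1 : (1:ℝ) ≤ (gsnsup u : ℝ) := by exact_mod_cast gsnsup_pos (hne u hu)
    exact Real.rpow_le_rpow_of_nonpos (by linarith) (gsnsup_le_sqrt hd u)
      (neg_nonpos.mpr (by linarith))
  have step2 : ∑ u ∈ U, ((gsnsup u : ℝ)) ^ (-e) ≤ A * C₁ := by
    rw [← Finset.sum_fiberwise_of_maps_to (g := gsnsup) (t := U.image gsnsup)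
      (fun u hu => Finset.mem_image_of_mem _ hu)]
    have hfiber : ∀ k ∈ U.image gsnsup,
        ∑ u ∈ U.filter (fun u => gsnsup u = k), ((gsnsup u : ℝ)) ^ (-e)
        ≤ A * (k:ℝ) ^ ((d:ℝ) - 1 - e) := by
      intro k hk
      obtain ⟨u₀, hu₀, hku⟩ := Finset.mem_image.mp hk
      have hk1 : 1 ≤ k := hku ▸ gsnsup_pos (hne u₀ hu₀)
      have hk1' : (1:ℝ) ≤ (k:ℝ) := by exact_mod_cast hk1
      have hkpos : (0:ℝ) < (k:ℝ) := by linarith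
      have hsame : ∀ u ∈ U.filter (fun u => gsnsup u = k),
          ((gsnsup u : ℝ)) ^ (-e) = ((k:ℝ)) ^ (-e) := by
        intro u hu
        rw [(Finset.mem_filter.mp hu).2]
      rw [Finset.sum_congr rfl hsame, Finset.sum_const, nsmul_eq_mul]
      have hcard := gs_shell_card hd hk1 (U.filter (fun u => gsnsup u = k))
        (fun u hu => (Finset.mem_filter.mp hu).2)
      have hre : (0:ℝ) ≤ ((k:ℝ)) ^ (-e) := Real.rpow_nonneg (le_of_lt hkpos) _
      calc ((U.filter (fun u => gsnsup u = k)).card : ℝ) * ((k:ℝ)) ^ (-e)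
          ≤ ((2*d) * (3*(k:ℝ))^(d-1)) * ((k:ℝ)) ^ (-e) := by
            exact mul_le_mul_of_nonneg_right hcard hre
        _ = A * ((k:ℝ)^(d-1) * ((k:ℝ)) ^ (-e)) := by rw [hA, mul_pow]; ring
        _ = A * (k:ℝ) ^ ((d:ℝ) - 1 - e) := by
            congr 1
            rw [← Real.rpow_natCast (k:ℝ) (d-1), ← Real.rpow_add hkpos]
            congr 1
            have : ((d - 1 : ℕ) : ℝ) = (d:ℝ) - 1 := by
              have := Nat.cast_sub hd (R := ℝ); push_cast at this ⊢; linarith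
            rw [this]; ring
    calc ∑ k ∈ U.image gsnsup, ∑ u ∈ U.filter (fun u => gsnsup u = k), ((gsnsup u : ℝ)) ^ (-e)
        ≤ ∑ k ∈ U.image gsnsup, A * (k:ℝ) ^ ((d:ℝ) - 1 - e) := Finset.sum_le_sum hfiber
      _ = A * ∑ k ∈ U.image gsnsup, (k:ℝ) ^ ((d:ℝ) - 1 - e) := by rw [Finset.mul_sum]
      _ ≤ A * C₁ := by
          apply mul_le_mul_of_nonneg_left _ (le_of_lt hA0)
          exact hsum.sum_le_tsum _ (fun n _ => Real.rpow_nonneg (Nat.cast_nonneg n) _)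
  linarith [step1, step2]

private lemma gs_term_bound {q d : ℕ} {e R : ℝ} (a : Fin (q+1) → ℝ)
    (hR : 1 ≤ R) (ha1 : ∀ i, 1 ≤ a i) (haR : ∀ i, a i ≤ R)
    (hcase : (q = 1 ∧ e = 2*(d:ℝ) ∧ a 1 = a 0) ∨
      (2 ≤ q ∧ e = (d:ℝ) + ((q:ℝ)-1)/(2*(q:ℝ)))) :
    ∏ i, (a i) ^ (-(d:ℝ)) ≤ R ^ (((q:ℝ)-1)/2) * ∏ j : Fin q, (a j.castSucc) ^ (-e) := by
  have ha0 : ∀ i, (0:ℝ) < a i := fun i => lt_of_lt_of_le one_pos (ha1 i)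
  rcases hcase with ⟨rfl, he, haa⟩ | ⟨hq2, he⟩
  · rw [Fin.prod_univ_two, Fin.prod_univ_one]
    have h1 : (((1:ℕ):ℝ)-1)/2 = 0 := by norm_num
    rw [h1, Real.rpow_zero, one_mul, Fin.castSucc_zero, haa,
      ← Real.rpow_add (ha0 0), he]
    apply le_of_eq
    congr 1
    ring
  · set β : ℝ := ((q:ℝ)-1)/(2*(q:ℝ)) with hβ
    have hq0 : (0:ℝ) < (q:ℝ) := by positivity
    have hβ0 : 0 ≤ β := by
      rw [hβ]
      apply div_nonneg _ (by positivity)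
      have : (2:ℝ) ≤ (q:ℝ) := by exact_mod_cast hq2
      linarith
    calc ∏ i, (a i) ^ (-(d:ℝ))
        = (∏ j : Fin q, (a j.castSucc) ^ (-(d:ℝ))) * (a (Fin.last q)) ^ (-(d:ℝ)) :=
          Fin.prod_univ_castSucc _
      _ ≤ (∏ j : Fin q, (a j.castSucc) ^ (-(d:ℝ))) * 1 := by
          apply mul_le_mul_of_nonneg_left _ (Finset.prod_nonneg fun j _ =>
            Real.rpow_nonneg (le_of_lt (ha0 _)) _)
          exact Real.rpow_le_one_of_one_le_of_nonpos (ha1 _)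
            (neg_nonpos.mpr (by positivity))
      _ = ∏ j : Fin q, (a j.castSucc) ^ (-(d:ℝ)) := mul_one _
      _ ≤ ∏ j : Fin q, ((a j.castSucc) ^ (-e) * R ^ β) := by
          apply Finset.prod_le_prod (fun j _ => Real.rpow_nonneg (le_of_lt (ha0 _)) _)
          intro j _
          have : (-(d:ℝ)) = (-e) + β := by rw [he]; ring
          rw [this, Real.rpow_add (ha0 _)]
          apply mul_le_mul_of_nonneg_left _ (Real.rpow_nonneg (le_of_lt (ha0 _)) _)
          exact Real.rpow_le_rpow (le_of_lt (ha0 _)) (haR _) hβ0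
      _ = (∏ j : Fin q, (a j.castSucc) ^ (-e)) * (R ^ β) ^ (q : ℕ) := by
          rw [Finset.prod_mul_distrib, Finset.prod_const, Finset.card_univ, Fintype.card_fin]
      _ = R ^ (((q:ℝ)-1)/2) * ∏ j : Fin q, (a j.castSucc) ^ (-e) := by
          rw [← Real.rpow_natCast (R ^ β) q, ← Real.rpow_mul (by linarith : (0:ℝ) ≤ R)]
          rw [mul_comm]
          congr 2
          rw [hβ]
          field_simp

set_option maxHeartbeats 1000000 in
/-- Let `d ≥ 2`, `p ≥ 2`, `D` a bounded subset of `R^d` and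
`D_ε = D/ε ∩ Z^d`. Then the sum over pairwise distinct `v₁,...,v_p ∈ D_ε` of the cyclic
product `∏_{i} |v_i - v_{i+1}|^{-d}` (indices mod `p`, Euclidean norm) is
`O(ε^{-p/2 - d + 1})` as `ε → 0`, with implied constant depending only on `D`, `d`, `p`.
(The set of lattice points is encoded by an arbitrary finite `S` contained in `D/ε`.) -/
theorem gradient_squared_stmt10 (d p : ℕ) (hd : 2 ≤ d) (hp : 2 ≤ p)
    (D : Set (Fin d → ℝ)) (hD : Bornology.IsBounded D) :
    ∃ C : ℝ, 0 < C ∧ ∀ ε : ℝ, 0 < ε → ε ≤ 1 →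
      ∀ S : Finset (Fin d → ℤ), (∀ v ∈ S, (fun i => ε * (v i : ℝ)) ∈ D) →
        ∑ v ∈ (Finset.univ : Finset (Fin p → {x // x ∈ S})).filter
            (fun v => Function.Injective v),
          ∏ i : Fin p,
            (Real.sqrt (∑ m, (((v i : Fin d → ℤ) m : ℝ)
                - ((v (finRotate p i) : Fin d → ℤ) m : ℝ)) ^ 2)) ^ (-(d : ℤ))
        ≤ C * ε ^ (-(p : ℝ) / 2 - d + 1) := by
  obtain ⟨q, rfl⟩ : ∃ q, p = q + 1 := ⟨p - 1, by omega⟩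
  have hq : 1 ≤ q := by omega
  have hd1 : 1 ≤ d := by omega
  have hd1' : (1:ℝ) ≤ (d:ℝ) := by exact_mod_cast hd1
  obtain ⟨e, he, hecase⟩ : ∃ e : ℝ, (d:ℝ) < e ∧
      ((q = 1 ∧ e = 2*(d:ℝ)) ∨ (2 ≤ q ∧ e = (d:ℝ) + ((q:ℝ)-1)/(2*(q:ℝ)))) := by
    rcases eq_or_ne q 1 with rfl | hq1
    · exact ⟨2*(d:ℝ), by linarith, Or.inl ⟨rfl, rfl⟩⟩
    · have hq2 : 2 ≤ q := by omega
      refine ⟨(d:ℝ) + ((q:ℝ)-1)/(2*(q:ℝ)), ?_, Or.inr ⟨hq2, rfl⟩⟩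
      have h2 : (2:ℝ) ≤ (q:ℝ) := by exact_mod_cast hq2
      have h3 : 0 < ((q:ℝ)-1)/(2*(q:ℝ)) := by
        apply div_pos <;> linarith
      linarith
  obtain ⟨C₀, hC₀, hlat⟩ := gs_lattice_sum hd1 he
  obtain ⟨M₀, hM₀⟩ := isBounded_iff_forall_norm_le.mp hD
  set M : ℝ := max M₀ 1 with hMdef
  have hM1 : (1:ℝ) ≤ M := le_max_right _ _
  have hM : ∀ x ∈ D, ‖x‖ ≤ M := fun x hx => le_trans (hM₀ x hx) (le_max_left _ _)
  have hsd : (1:ℝ) ≤ Real.sqrt d := by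
    rw [show (1:ℝ) = Real.sqrt 1 from (Real.sqrt_one).symm]
    exact Real.sqrt_le_sqrt (by exact_mod_cast hd1)
  set β : ℝ := ((q:ℝ)-1)/2 with hβdef
  have hβ0 : 0 ≤ β := by
    rw [hβdef]
    have : (1:ℝ) ≤ (q:ℝ) := by exact_mod_cast hq
    linarith
  have hCpos : 0 < (5*M)^d * (2*Real.sqrt d*M) ^ β * C₀^q := by
    apply mul_pos (mul_pos (pow_pos (by linarith) d) _) (pow_pos hC₀ q)
    apply Real.rpow_pos_of_pos
    nlinarith
  refine ⟨(5*M)^d * (2*Real.sqrt d*M) ^ β * C₀^q, hCpos, ?_⟩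
  intro ε hε hε1 S hS
  have hcoord : ∀ u ∈ S, ∀ m, |((u m : ℤ) : ℝ)| ≤ M/ε := by
    intro u hu m
    have h1 := hM _ (hS u hu)
    have h2 := norm_le_pi_norm (fun i => ε * ((u i : ℤ):ℝ)) m
    have h3 : |ε * ((u m : ℤ):ℝ)| ≤ M := by
      rw [Real.norm_eq_abs] at h2
      exact le_trans h2 h1
    rw [abs_mul, abs_of_pos hε] at h3
    rw [le_div_iff₀ hε, mul_comm]
    exact h3
  set N : ℕ := ⌈M/ε⌉₊ with hNdef
  have hMε : (0:ℝ) ≤ M/ε := by positivity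
  have hMε1 : (1:ℝ) ≤ M/ε := by
    rw [le_div_iff₀ hε, one_mul]; linarith
  have hNc : ∀ u ∈ S, ∀ m, u m ∈ Finset.Icc (-(N:ℤ)) (N:ℤ) := by
    intro u hu m
    have h2 : |((u m : ℤ):ℝ)| ≤ (N:ℝ) := le_trans (hcoord u hu m) (Nat.le_ceil _)
    rw [abs_le] at h2
    rw [Finset.mem_Icc]
    constructor
    · exact_mod_cast h2.1
    · exact_mod_cast h2.2
  set R : ℝ := Real.sqrt d * (2*M/ε) with hRdef
  have hR1 : (1:ℝ) ≤ R := by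
    rw [hRdef, mul_div_assoc]
    nlinarith [mul_le_mul hsd hMε1 (by norm_num : (0:ℝ) ≤ 1)
      (by linarith : (0:ℝ) ≤ Real.sqrt d)]
  set Φ : (Fin (q+1) → {x // x ∈ S}) → (Fin d → ℤ) × (Fin q → (Fin d → ℤ)) :=
    fun v => ((v 0 : Fin d → ℤ),
      fun j => ((v j.succ : Fin d → ℤ)) - ((v j.castSucc : Fin d → ℤ))) with hΦ
  set G : (Fin d → ℤ) × (Fin q → (Fin d → ℤ)) → ℝ :=
    fun x => R ^ β * ∏ j : Fin q, (Real.sqrt (∑ m, ((x.2 j m : ℝ))^2)) ^ (-e) with hG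
  have hGnn : ∀ x, 0 ≤ G x := by
    intro x
    rw [hG]
    exact mul_nonneg (Real.rpow_nonneg (by linarith) _)
      (Finset.prod_nonneg fun j _ => Real.rpow_nonneg (Real.sqrt_nonneg _) _)
  have hrot : ∀ i : Fin (q+1), finRotate (q+1) i = i + 1 := finRotate_succ_apply
  have hrotc : ∀ j : Fin q, finRotate (q+1) j.castSucc = j.succ := by
    intro j
    rw [hrot, Fin.coeSucc_eq_succ]
  -- term bound
  have hterm : ∀ v ∈ (Finset.univ : Finset (Fin (q+1) → {x // x ∈ S})).filter
      (fun v => Function.Injective v),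
      (∏ i : Fin (q+1), (Real.sqrt (∑ m, (((v i : Fin d → ℤ) m : ℝ)
        - ((v (finRotate (q+1) i) : Fin d → ℤ) m : ℝ)) ^ 2)) ^ (-(d : ℤ)))
      ≤ G (Φ v) := by
    intro v hv
    have hinj : Function.Injective v := (Finset.mem_filter.mp hv).2
    have hne : ∀ i : Fin (q+1), (v i : Fin d → ℤ) ≠ (v (finRotate (q+1) i) : Fin d → ℤ) := by
      intro i h
      have h3 : i = finRotate (q+1) i := hinj (Subtype.coe_injective h)
      rw [hrot i] at h3
      have h4 : (0 : Fin (q+1)) = 1 := by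
        have := add_left_cancel (a := i) (b := (0 : Fin (q+1))) (c := 1)
          (by rw [add_zero, ← h3])
        exact this
      have h5 : ((0 : Fin (q+1)) : ℕ) = ((1 : Fin (q+1)) : ℕ) := congrArg Fin.val h4
      rw [Fin.val_zero, Fin.val_one'] at h5
      have h6 : 1 % (q+1) = 1 := Nat.mod_eq_of_lt (by omega)
      omega
    have hE1 : ∀ i : Fin (q+1), 1 ≤ Real.sqrt (∑ m, (((v i : Fin d → ℤ) m : ℝ)
        - ((v (finRotate (q+1) i) : Fin d → ℤ) m : ℝ)) ^ 2) := by
      intro i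
      obtain ⟨m, hm⟩ := Function.ne_iff.mp (hne i)
      apply Real.one_le_sqrt.mpr
      have h5 : (v i : Fin d → ℤ) m - (v (finRotate (q+1) i) : Fin d → ℤ) m ≠ 0 :=
        sub_ne_zero_of_ne hm
      have h6 : 1 ≤ |(v i : Fin d → ℤ) m - (v (finRotate (q+1) i) : Fin d → ℤ) m| :=
        Int.one_le_abs h5
      have h7 : (1:ℝ) ≤ |(((v i : Fin d → ℤ) m : ℝ)
          - ((v (finRotate (q+1) i) : Fin d → ℤ) m : ℝ))| := by
        have h8 : ((|(v i : Fin d → ℤ) m - (v (finRotate (q+1) i) : Fin d → ℤ) m| : ℤ) : ℝ)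
            = |(((v i : Fin d → ℤ) m : ℝ) - ((v (finRotate (q+1) i) : Fin d → ℤ) m : ℝ))| := by
          push_cast
          rfl
        rw [← h8]
        exact_mod_cast h6
      have h9 : (1:ℝ) ≤ (((v i : Fin d → ℤ) m : ℝ)
          - ((v (finRotate (q+1) i) : Fin d → ℤ) m : ℝ)) ^ 2 := by
        nlinarith [sq_abs (((v i : Fin d → ℤ) m : ℝ)
          - ((v (finRotate (q+1) i) : Fin d → ℤ) m : ℝ))]
      exact le_trans h9 (Finset.single_le_sum
        (f := fun m => (((v i : Fin d → ℤ) m : ℝ)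
          - ((v (finRotate (q+1) i) : Fin d → ℤ) m : ℝ)) ^ 2)
        (fun m _ => sq_nonneg _) (mem_univ m))
    have hER : ∀ i : Fin (q+1), Real.sqrt (∑ m, (((v i : Fin d → ℤ) m : ℝ)
        - ((v (finRotate (q+1) i) : Fin d → ℤ) m : ℝ)) ^ 2) ≤ R := by
      intro i
      have hsum : (∑ m, (((v i : Fin d → ℤ) m : ℝ)
          - ((v (finRotate (q+1) i) : Fin d → ℤ) m : ℝ)) ^ 2) ≤ (d:ℝ) * (2*M/ε)^2 := by
        calc (∑ m, (((v i : Fin d → ℤ) m : ℝ)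
            - ((v (finRotate (q+1) i) : Fin d → ℤ) m : ℝ)) ^ 2)
            ≤ ∑ _m : Fin d, (2*M/ε)^2 := by
              apply Finset.sum_le_sum
              intro m _
              have h1 := hcoord _ (v i).2 m
              have h2 := hcoord _ (v (finRotate (q+1) i)).2 m
              have habs : |(((v i : Fin d → ℤ) m : ℝ)
                  - ((v (finRotate (q+1) i) : Fin d → ℤ) m : ℝ))| ≤ 2*M/ε := by
                calc |(((v i : Fin d → ℤ) m : ℝ)
                    - ((v (finRotate (q+1) i) : Fin d → ℤ) m : ℝ))|
                    ≤ |((v i : Fin d → ℤ) m : ℝ)|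
                      + |((v (finRotate (q+1) i) : Fin d → ℤ) m : ℝ)| := abs_sub _ _
                  _ ≤ 2*M/ε := by rw [show (2:ℝ)*M/ε = M/ε + M/ε by ring]; exact add_le_add h1 h2
              nlinarith [abs_nonneg (((v i : Fin d → ℤ) m : ℝ)
                - ((v (finRotate (q+1) i) : Fin d → ℤ) m : ℝ)), sq_abs (((v i : Fin d → ℤ) m : ℝ)
                - ((v (finRotate (q+1) i) : Fin d → ℤ) m : ℝ))]
          _ = (d:ℝ) * (2*M/ε)^2 := by
              rw [Finset.sum_const, Finset.card_univ, Fintype.card_fin, nsmul_eq_mul]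
      calc Real.sqrt (∑ m, (((v i : Fin d → ℤ) m : ℝ)
          - ((v (finRotate (q+1) i) : Fin d → ℤ) m : ℝ)) ^ 2)
          ≤ Real.sqrt ((d:ℝ) * (2*M/ε)^2) := Real.sqrt_le_sqrt hsum
        _ = R := by
            rw [hRdef, Real.sqrt_mul (by positivity) _, Real.sqrt_sq (by positivity)]
    have hcase' : (q = 1 ∧ e = 2*(d:ℝ) ∧
        Real.sqrt (∑ m, (((v 1 : Fin d → ℤ) m : ℝ)
          - ((v (finRotate (q+1) 1) : Fin d → ℤ) m : ℝ)) ^ 2)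
        = Real.sqrt (∑ m, (((v 0 : Fin d → ℤ) m : ℝ)
          - ((v (finRotate (q+1) 0) : Fin d → ℤ) m : ℝ)) ^ 2)) ∨
        (2 ≤ q ∧ e = (d:ℝ) + ((q:ℝ)-1)/(2*(q:ℝ))) := by
      rcases hecase with ⟨hq1, he2⟩ | h
      · left
        refine ⟨hq1, he2, ?_⟩
        subst hq1
        have e1 : finRotate 2 1 = 0 := by decide
        have e0 : finRotate 2 0 = 1 := by decide
        rw [e1, e0]
        congr 1
        apply Finset.sum_congr rfl
        intro m _
        ring
      · exact Or.inr h
    calc (∏ i : Fin (q+1), (Real.sqrt (∑ m, (((v i : Fin d → ℤ) m : ℝ)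
          - ((v (finRotate (q+1) i) : Fin d → ℤ) m : ℝ)) ^ 2)) ^ (-(d : ℤ)))
        = ∏ i : Fin (q+1), (Real.sqrt (∑ m, (((v i : Fin d → ℤ) m : ℝ)
          - ((v (finRotate (q+1) i) : Fin d → ℤ) m : ℝ)) ^ 2)) ^ (-(d : ℝ)) := by
          apply Finset.prod_congr rfl
          intro i _
          rw [← Real.rpow_intCast]
          norm_num
      _ ≤ R ^ (((q:ℝ)-1)/2) * ∏ j : Fin q, (Real.sqrt (∑ m,
          (((v j.castSucc : Fin d → ℤ) m : ℝ)
          - ((v (finRotate (q+1) j.castSucc) : Fin d → ℤ) m : ℝ)) ^ 2)) ^ (-e) :=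
          gs_term_bound _ hR1 hE1 hER hcase'
      _ = G (Φ v) := by
          rw [hG, hβdef]
          simp only [hΦ, Pi.sub_apply]
          congr 1
          apply Finset.prod_congr rfl
          intro j _
          rw [hrotc j]
          have hsumeq : (∑ m, ((((v j.castSucc : Fin d → ℤ) m : ℝ))
              - (((v j.succ : Fin d → ℤ) m : ℝ)))^2)
              = ∑ m, ((((v j.succ : Fin d → ℤ) m - (v j.castSucc : Fin d → ℤ) m : ℤ)) : ℝ)^2 :=
            Finset.sum_congr rfl (fun m _ => by push_cast; ring)
          rw [hsumeq]
  -- injectivity of Φ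
  have hΦinj : Function.Injective Φ := by
    intro x y h
    rw [hΦ] at h
    simp only [Prod.mk.injEq] at h
    obtain ⟨h0, hw⟩ := h
    funext i
    apply Subtype.ext
    induction i using Fin.induction with
    | zero => exact h0
    | succ j ih =>
      have hj := congrFun hw j
      have : (x j.succ : Fin d → ℤ) - (x j.castSucc : Fin d → ℤ)
          = (y j.succ : Fin d → ℤ) - (y j.castSucc : Fin d → ℤ) := hj
      rw [ih] at this
      exact sub_left_injective this
  -- image containment
  set A : Finset (Fin d → ℤ) := Fintype.piFinset (fun _ : Fin d => Finset.Icc (-(N:ℤ)) (N:ℤ))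
    with hA
  set W : Finset (Fin d → ℤ) :=
    (Fintype.piFinset (fun _ : Fin d => Finset.Icc (-(2*(N:ℤ))) (2*(N:ℤ)))).erase 0 with hW
  have himg : ((Finset.univ : Finset (Fin (q+1) → {x // x ∈ S})).filter
      (fun v => Function.Injective v)).image Φ
      ⊆ A ×ˢ Fintype.piFinset (fun _ : Fin q => W) := by
    intro x hx
    obtain ⟨v, hv, rfl⟩ := Finset.mem_image.mp hx
    have hinj : Function.Injective v := (Finset.mem_filter.mp hv).2
    rw [Finset.mem_product]
    constructor
    · rw [hΦ, hA]
      simp only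
      rw [Fintype.mem_piFinset]
      intro m
      exact hNc _ (v 0).2 m
    · rw [hΦ]
      simp only
      rw [Fintype.mem_piFinset]
      intro j
      rw [hW, Finset.mem_erase]
      constructor
      · apply sub_ne_zero_of_ne
        intro h
        have h2 : j.succ = j.castSucc := hinj (Subtype.coe_injective h)
        exact absurd h2 (Fin.castSucc_lt_succ : j.castSucc < j.succ).ne'
      · rw [Fintype.mem_piFinset]
        intro m
        have h1 := Finset.mem_Icc.mp (hNc _ (v j.succ).2 m)
        have h2 := Finset.mem_Icc.mp (hNc _ (v j.castSucc).2 m)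
        rw [Pi.sub_apply, Finset.mem_Icc]
        omega
  have hW0 : (0 : Fin d → ℤ) ∉ W := Finset.notMem_erase _ _
  set Sf : ℝ := ∑ u ∈ W, Real.sqrt (∑ m, ((u m : ℝ))^2) ^ (-e) with hSf
  have hSf0 : 0 ≤ Sf := Finset.sum_nonneg fun u _ =>
    Real.rpow_nonneg (Real.sqrt_nonneg _) _
  have hSfC : Sf ≤ C₀ := hlat W hW0
  -- cardinality of A
  have hIccCard : (Finset.Icc (-(N:ℤ)) (N:ℤ)).card = 2*N+1 := by
    rw [Int.card_Icc]
    have : (N : ℤ) + 1 - -(N:ℤ) = ((2*N+1 : ℕ) : ℤ) := by push_cast; ring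
    rw [this, Int.toNat_natCast]
  have hAcard : (A.card : ℝ) ≤ (5*(M/ε))^d := by
    have h1 : A.card = (2*N+1)^d := by
      rw [hA, Fintype.card_piFinset]
      rw [Finset.prod_congr rfl (fun j _ => hIccCard), Finset.prod_const,
        Finset.card_univ, Fintype.card_fin]
    have h2 : ((2*N+1 : ℕ) : ℝ) ≤ 5*(M/ε) := by
      have h3 : (N:ℝ) < M/ε + 1 := Nat.ceil_lt_add_one hMε
      push_cast
      linarith
    rw [h1]
    push_cast
    apply pow_le_pow_left₀ (by positivity)
    push_cast at h2
    linarith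
  -- main chain
  have hβR : R ^ β = (2*Real.sqrt d*M)^β * (ε ^ β)⁻¹ := by
    have h1 : R = (2*Real.sqrt d*M)/ε := by rw [hRdef]; ring
    rw [h1, Real.div_rpow (by nlinarith) (le_of_lt hε), div_eq_mul_inv]
  have hexp : ε ^ (-((q:ℝ)+1) / 2 - (d:ℝ) + 1) = (ε^(d:ℕ))⁻¹ * (ε^β)⁻¹ := by
    have h1 : (-((q:ℝ)+1) / 2 - (d:ℝ) + 1) = (-(d:ℝ)) + (-β) := by
      rw [hβdef]; ring
    rw [h1, Real.rpow_add hε, Real.rpow_neg (le_of_lt hε), Real.rpow_neg (le_of_lt hε),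
      Real.rpow_natCast]
  calc ∑ v ∈ (Finset.univ : Finset (Fin (q+1) → {x // x ∈ S})).filter
          (fun v => Function.Injective v),
        ∏ i : Fin (q+1), (Real.sqrt (∑ m, (((v i : Fin d → ℤ) m : ℝ)
            - ((v (finRotate (q+1) i) : Fin d → ℤ) m : ℝ)) ^ 2)) ^ (-(d : ℤ))
      ≤ ∑ v ∈ (Finset.univ : Finset (Fin (q+1) → {x // x ∈ S})).filter
          (fun v => Function.Injective v), G (Φ v) := Finset.sum_le_sum hterm
    _ = ∑ x ∈ ((Finset.univ : Finset (Fin (q+1) → {x // x ∈ S})).filter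
          (fun v => Function.Injective v)).image Φ, G x :=
        (Finset.sum_image (fun x _ y _ hxy => hΦinj hxy)).symm
    _ ≤ ∑ x ∈ A ×ˢ Fintype.piFinset (fun _ : Fin q => W), G x :=
        Finset.sum_le_sum_of_subset_of_nonneg himg (fun x _ _ => hGnn x)
    _ = ∑ a ∈ A, ∑ w ∈ Fintype.piFinset (fun _ : Fin q => W), G (a, w) :=
        Finset.sum_product _ _ _
    _ = (A.card : ℝ) * (R ^ β * Sf^q) := by
        have hinner : ∀ a, ∑ w ∈ Fintype.piFinset (fun _ : Fin q => W), G (a, w)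
            = R ^ β * Sf^q := by
          intro a
          have hps := Finset.prod_univ_sum (fun _ : Fin q => W)
            (fun _ (u : Fin d → ℤ) => Real.sqrt (∑ m, ((u m : ℝ))^2) ^ (-e))
          simp only [hG]
          rw [← Finset.mul_sum, ← hps, Finset.prod_const, Finset.card_univ,
            Fintype.card_fin, ← hSf]
        rw [Finset.sum_congr rfl (fun a _ => hinner a), Finset.sum_const, nsmul_eq_mul]
    _ ≤ (5*(M/ε))^d * (R ^ β * C₀^q) := by
        apply mul_le_mul hAcard _ (mul_nonneg (Real.rpow_nonneg (by linarith) _)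
          (pow_nonneg hSf0 q)) (by positivity)
        exact mul_le_mul_of_nonneg_left (pow_le_pow_left₀ hSf0 hSfC q)
          (Real.rpow_nonneg (by linarith) _)
    _ = (5*M)^d * (2*Real.sqrt d*M) ^ β * C₀^q * ε ^ (-((q:ℝ)+1) / 2 - (d:ℝ) + 1) := by
        have hεne : ε ≠ 0 := ne_of_gt hε
        have hεβ : ε ^ β ≠ 0 := ne_of_gt (Real.rpow_pos_of_pos hε β)
        have hεd : ε ^ (d:ℕ) ≠ 0 := pow_ne_zero d hεne
        rw [hβR, hexp]
        field_simp
        ring_nf; simp [hεne]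
    _ = (5*M)^d * (2*Real.sqrt d*M) ^ β * C₀^q * ε ^ (-((q+1:ℕ):ℝ) / 2 - (d:ℝ) + 1) := by
        rw [show (-(((q+1:ℕ)):ℝ) / 2 - (d:ℝ) + 1) = (-((q:ℝ)+1) / 2 - (d:ℝ) + 1) by
          push_cast; ring]
end

section
/- Let d ≥ 2 and suppose a centered random field Φ on D_ε = D/ε ∩ Z^d satisfies the joint-cumulant bound |κ(Φ(v) : v ∈ V)| ≤ C_n ∑_{σ ∈ S⁰_cycl(V)} ∏_{v ∈ V} min(|v - σ(v)|^{-d}, 1) for every finite multiset V of n points. Then for every n ≥ 3, ε^{nd/2} ∑_{v₁,...,v_n ∈ D_ε} |κ(Φ(v_i) : i ∈ [n])| = O(ε^{(d-1)(n-2)/2}), which tends to 0 as ε → 0. -/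
open scoped Classical

open Finset

noncomputable def GS11.h (t : ℤ) : ℝ := ((max |t| 1 : ℤ) : ℝ)⁻¹

namespace GS11

lemma h_nonneg (t : ℤ) : 0 ≤ h t := by
  unfold h; positivity

lemma h_le_one (t : ℤ) : h t ≤ 1 := by
  unfold h
  rw [inv_le_one_iff₀]
  right
  exact_mod_cast le_max_right |t| 1

lemma h_zero : h 0 = 1 := by simp [h]

lemma h_neg (t : ℤ) : h (-t) = h t := by simp [h]

/-- chain sum bound -/
lemma chainSum {T : Type*} [Fintype T] (G : T → T → ℝ) (A : ℝ)
    (hG0 : ∀ v w, 0 ≤ G v w) (hA : ∀ w, ∑ v : T, G v w ≤ A) (hA0 : 0 ≤ A) :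
    ∀ m : ℕ, ∑ W : Fin (m+1) → T, ∏ j : Fin m, G (W j.castSucc) (W j.succ)
      ≤ (Fintype.card T) * A ^ m := by
  intro m
  induction m with
  | zero =>
    simp [Fintype.card_fun]
  | succ m ih =>
    have hsum : ∑ W : Fin (m+2) → T, ∏ j : Fin (m+1), G (W j.castSucc) (W j.succ)
        = ∑ p : T × (Fin (m+1) → T), G p.1 (p.2 0) * ∏ j : Fin m, G (p.2 j.castSucc) (p.2 j.succ) := by
      refine Fintype.sum_equiv ((Fin.consEquiv fun _ : Fin (m+2) => T).symm) _ _ ?_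
      intro W
      rw [Fin.prod_univ_succ]
      congr 1
    rw [hsum, Fintype.sum_prod_type_right]
    -- ∑ W' ∑ t, G t (W' 0) * P
    have : ∀ W' : Fin (m+1) → T, ∑ t : T, G t (W' 0) * ∏ j : Fin m, G (W' j.castSucc) (W' j.succ)
        ≤ A * ∏ j : Fin m, G (W' j.castSucc) (W' j.succ) := by
      intro W'
      rw [← Finset.sum_mul]
      exact mul_le_mul_of_nonneg_right (hA _) (Finset.prod_nonneg fun j _ => hG0 _ _)
    calc ∑ W' : Fin (m+1) → T, ∑ t : T, G t (W' 0) * ∏ j : Fin m, G (W' j.castSucc) (W' j.succ)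
        ≤ ∑ W' : Fin (m+1) → T, A * ∏ j : Fin m, G (W' j.castSucc) (W' j.succ) :=
          Finset.sum_le_sum fun W' _ => this W'
      _ = A * ∑ W' : Fin (m+1) → T, ∏ j : Fin m, G (W' j.castSucc) (W' j.succ) := by
          rw [Finset.mul_sum]
      _ ≤ A * ((Fintype.card T) * A ^ m) := mul_le_mul_of_nonneg_left ih hA0
      _ = (Fintype.card T) * A ^ (m+1) := by ring

lemma cycleSum {T : Type*} [Fintype T] (G : T → T → ℝ) (A : ℝ)
    (hG0 : ∀ v w, 0 ≤ G v w) (hG1 : ∀ v w, G v w ≤ 1)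
    (hA : ∀ w, ∑ v : T, G v w ≤ A) (hA0 : 0 ≤ A)
    (m : ℕ) (σ : Equiv.Perm (Fin (m+1))) (hc : σ.IsCycle) (hfp : ∀ i, σ i ≠ i) :
    ∑ V : Fin (m+1) → T, ∏ i : Fin (m+1), G (V i) (V (σ i))
      ≤ (Fintype.card T) * A ^ m := by
  classical
  have hcyc : σ.IsCycleOn ((Finset.univ : Finset (Fin (m+1))) : Set (Fin (m+1))) := by
    rw [Finset.coe_univ]
    have h1 := hc.isCycleOn
    rwa [show {x | σ x ≠ x} = Set.univ from Set.eq_univ_of_forall hfp] at h1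
  have hkey : ∀ a b : ℕ, ((σ^a) 0 = (σ^b) 0) ↔ a ≡ b [MOD (m+1)] := by
    intro a b
    have := Equiv.Perm.IsCycleOn.pow_apply_eq_pow_apply hcyc
      (Finset.mem_univ (0 : Fin (m+1))) (m := a) (n := b)
    simpa [Finset.card_univ] using this
  set c : Fin (m+1) → Fin (m+1) := fun j => (σ^(j:ℕ)) 0 with hc_def
  have hinj : Function.Injective c := by
    intro j k hjk
    have h2 : (j:ℕ) % (m+1) = (k:ℕ) % (m+1) := (hkey j k).1 hjk
    ext
    rwa [Nat.mod_eq_of_lt j.isLt, Nat.mod_eq_of_lt k.isLt] at h2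
  have hbij : Function.Bijective c := Finite.injective_iff_bijective.1 hinj
  have hstep : ∀ j : Fin (m+1), σ (c j) = c (j+1) := by
    intro j
    show σ ((σ^(j:ℕ)) 0) = (σ^((j+1 : Fin (m+1)) : ℕ)) 0
    have h1 : σ ((σ^(j:ℕ)) 0) = (σ^((j:ℕ)+1)) 0 := by
      rw [pow_succ']; rfl
    rw [h1]
    apply (hkey _ _).2
    have h3 : ((j+1 : Fin (m+1)) : ℕ) = ((j:ℕ)+1) % (m+1) := by simp [Fin.add_def]
    rw [h3]
    exact (Nat.mod_modEq _ _).symm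
  calc ∑ V : Fin (m+1) → T, ∏ i : Fin (m+1), G (V i) (V (σ i))
      = ∑ V : Fin (m+1) → T, ∏ j : Fin (m+1), G (V (c j)) (V (c (j+1))) := by
        refine Finset.sum_congr rfl fun V _ => ?_
        refine (Fintype.prod_bijective c hbij _ _ fun j => ?_).symm
        rw [hstep]
    _ ≤ ∑ V : Fin (m+1) → T, ∏ j : Fin m, G (V (c j.castSucc)) (V (c j.succ)) := by
        refine Finset.sum_le_sum fun V _ => ?_
        rw [Fin.prod_univ_castSucc]
        have h4 : (∏ j : Fin m, G (V (c j.castSucc)) (V (c (j.castSucc + 1))))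
            = ∏ j : Fin m, G (V (c j.castSucc)) (V (c j.succ)) := by
          refine Finset.prod_congr rfl fun j _ => ?_
          rw [Fin.coeSucc_eq_succ]
        rw [h4] at *
        exact mul_le_of_le_one_right (Finset.prod_nonneg fun j _ => hG0 _ _) (hG1 _ _)
    _ = ∑ W : Fin (m+1) → T, ∏ j : Fin m, G (W j.castSucc) (W j.succ) := by
        refine Fintype.sum_equiv
          (Equiv.arrowCongr (Equiv.ofBijective c hbij) (Equiv.refl T)).symm _ _ ?_
        intro V
        rfl
    _ ≤ (Fintype.card T) * A ^ m := chainSum G A hG0 hA hA0 m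




lemma h_succ (L : ℕ) : h ((L:ℤ)+1) = ((L:ℝ)+1)⁻¹ := by
  unfold h
  rw [abs_of_nonneg (by positivity), max_eq_left (by omega)]
  push_cast
  ring

lemma sum_h_le (L : ℕ) : ∑ t ∈ Finset.Icc (-(L:ℤ)) (L:ℤ), h t ≤ 1 + 2 * (harmonic L : ℝ) := by
  induction L with
  | zero => simp [h_zero]
  | succ L ih =>
    have hset : Finset.Icc (-(L+1:ℤ)) (L+1:ℤ)
        = insert (-(L+1:ℤ)) (insert ((L+1:ℤ)) (Finset.Icc (-(L:ℤ)) (L:ℤ))) := by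
      ext x
      simp only [Finset.mem_Icc, Finset.mem_insert]
      omega
    have h1 : (-(L+1:ℤ)) ∉ insert ((L+1:ℤ)) (Finset.Icc (-(L:ℤ)) (L:ℤ)) := by
      simp only [Finset.mem_insert, Finset.mem_Icc]
      omega
    have h2 : ((L+1:ℤ)) ∉ Finset.Icc (-(L:ℤ)) (L:ℤ) := by
      simp only [Finset.mem_Icc]
      omega
    have hcast : ∑ t ∈ Finset.Icc (-((L:ℤ)+1)) ((L:ℤ)+1), h t
        = h (-((L:ℤ)+1)) + (h ((L:ℤ)+1) + ∑ t ∈ Finset.Icc (-(L:ℤ)) (L:ℤ), h t) := by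
      push_cast at hset ⊢
      rw [hset, Finset.sum_insert h1, Finset.sum_insert h2]
    have hh : h (-((L:ℤ)+1)) = ((L:ℝ)+1)⁻¹ := by rw [h_neg, h_succ]
    have hharm : (harmonic (L+1) : ℝ) = (harmonic L : ℝ) + ((L:ℝ)+1)⁻¹ := by
      rw [harmonic_succ]
      push_cast
      ring
    push_cast
    rw [hcast, hh, h_succ, hharm]
    linarith

lemma term_le {d : ℕ} (v w : Fin d → ℤ) :
    (if v = w then (1:ℝ) else
      (Real.sqrt (∑ m, ((v m : ℝ) - (w m : ℝ)) ^ 2)) ^ (-(d : ℤ)))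
      ≤ ∏ m, h (v m - w m) := by
  split_ifs with hvw
  · subst hvw
    simp [h_zero]
  · set s := Real.sqrt (∑ m, ((v m : ℝ) - (w m : ℝ)) ^ 2) with hs
    obtain ⟨m₀, hm₀⟩ : ∃ m, v m ≠ w m := by
      by_contra hcon
      push_neg at hcon
      exact hvw (funext hcon)
    have hterm : (1:ℝ) ≤ ((v m₀ : ℝ) - (w m₀ : ℝ)) ^ 2 := by
      have : (1:ℤ) ≤ |v m₀ - w m₀| := Int.one_le_abs (sub_ne_zero.2 hm₀)
      have h2 : (1:ℝ) ≤ |(v m₀ : ℝ) - (w m₀ : ℝ)| := by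
        rw [show ((v m₀ : ℝ) - (w m₀ : ℝ)) = ((v m₀ - w m₀ : ℤ) : ℝ) by push_cast; ring]
        rw [← Int.cast_abs]
        exact_mod_cast this
      calc (1:ℝ) = 1^2 := by norm_num
        _ ≤ |(v m₀ : ℝ) - (w m₀ : ℝ)|^2 := by
            apply pow_le_pow_left₀ (by norm_num) h2
        _ = ((v m₀ : ℝ) - (w m₀ : ℝ))^2 := sq_abs _
    have hs1 : 1 ≤ s := by
      rw [hs, show (1:ℝ) = Real.sqrt 1 by simp]
      apply Real.sqrt_le_sqrt
      calc (1:ℝ) ≤ ((v m₀ : ℝ) - (w m₀ : ℝ)) ^ 2 := hterm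
        _ ≤ ∑ m, ((v m : ℝ) - (w m : ℝ)) ^ 2 :=
            Finset.single_le_sum (f := fun m => ((v m : ℝ) - (w m : ℝ)) ^ 2)
              (fun m _ => sq_nonneg _) (Finset.mem_univ m₀)
    have hsm : ∀ m, ((max |v m - w m| 1 : ℤ) : ℝ) ≤ s := by
      intro m
      rw [Int.cast_max]
      apply max_le _ (by exact_mod_cast hs1)
      have : |(v m : ℝ) - (w m : ℝ)| ≤ s := by
        rw [hs, ← Real.sqrt_sq_eq_abs]
        apply Real.sqrt_le_sqrt
        exact Finset.single_le_sum (f := fun m' => ((v m' : ℝ) - (w m' : ℝ)) ^ 2)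
          (fun m' _ => sq_nonneg _) (Finset.mem_univ m)
      calc ((|v m - w m| : ℤ) : ℝ) = |(v m : ℝ) - (w m : ℝ)| := by
            push_cast; ring_nf
        _ ≤ s := this
  -- now s ^ (-(d:ℤ)) = (s^d)⁻¹ ≤ (∏ max)⁻¹ = ∏ h
    have hprod : ∏ m : Fin d, ((max |v m - w m| 1 : ℤ) : ℝ) ≤ s ^ d := by
      calc ∏ m : Fin d, ((max |v m - w m| 1 : ℤ) : ℝ)
          ≤ ∏ m : Fin d, s := Finset.prod_le_prod
            (fun m _ => by positivity) (fun m _ => hsm m)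
        _ = s ^ d := by rw [Finset.prod_const, Finset.card_univ, Fintype.card_fin]
    have hprodpos : 0 < ∏ m : Fin d, ((max |v m - w m| 1 : ℤ) : ℝ) :=
      Finset.prod_pos fun m _ => by positivity
    rw [zpow_neg, zpow_natCast]
    calc (s ^ d)⁻¹ ≤ (∏ m : Fin d, ((max |v m - w m| 1 : ℤ) : ℝ))⁻¹ := by
          apply inv_anti₀ hprodpos hprod
      _ = ∏ m : Fin d, h (v m - w m) := by
          rw [← Finset.prod_inv_distrib]
          simp [h]



lemma rowSum {d : ℕ} (S : Finset (Fin d → ℤ)) (L : ℕ) (v : Fin d → ℤ)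
    (hbound : ∀ w ∈ S, ∀ m, |v m - w m| ≤ (L:ℤ)) :
    ∑ w : {x // x ∈ S}, ∏ m, h (v m - (w : Fin d → ℤ) m)
      ≤ (∑ t ∈ Finset.Icc (-(L:ℤ)) (L:ℤ), h t) ^ d := by
  classical
  rw [Finset.sum_coe_sort S (fun w => ∏ m, h (v m - w m))]
  have hinj : ∀ x ∈ S, ∀ y ∈ S, (fun w => v - w) x = (fun w => v - w) y → x = y := by
    intro x _ y _ hxy
    simpa using sub_right_injective hxy
  have himg : ∑ w ∈ S, ∏ m, h (v m - w m)
      = ∑ x ∈ S.image (fun w => v - w), ∏ m, h (x m) := by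
    rw [Finset.sum_image hinj]
    rfl
  rw [himg]
  have hsub : S.image (fun w => v - w) ⊆ Fintype.piFinset (fun _ : Fin d => Finset.Icc (-(L:ℤ)) (L:ℤ)) := by
    intro x hx
    rw [Finset.mem_image] at hx
    obtain ⟨w, hw, rfl⟩ := hx
    rw [Fintype.mem_piFinset]
    intro m
    rw [Finset.mem_Icc]
    have := hbound w hw m
    rw [abs_le] at this
    simpa using this
  calc ∑ x ∈ S.image (fun w => v - w), ∏ m, h (x m)
      ≤ ∑ x ∈ Fintype.piFinset (fun _ : Fin d => Finset.Icc (-(L:ℤ)) (L:ℤ)), ∏ m, h (x m) :=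
        Finset.sum_le_sum_of_subset_of_nonneg hsub
          (fun x _ _ => Finset.prod_nonneg fun m _ => h_nonneg _)
    _ = ∏ m : Fin d, ∑ t ∈ Finset.Icc (-(L:ℤ)) (L:ℤ), h t :=
        (Finset.prod_univ_sum _ _).symm
    _ = (∑ t ∈ Finset.Icc (-(L:ℤ)) (L:ℤ), h t) ^ d := by
        rw [Finset.prod_const, Finset.card_univ, Fintype.card_fin]

lemma card_le {d : ℕ} (S : Finset (Fin d → ℤ)) (L : ℕ)
    (hbound : ∀ w ∈ S, ∀ m, |w m| ≤ (L:ℤ)) :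
    (S.card : ℝ) ≤ ((2*(L:ℝ)+1)) ^ d := by
  classical
  have hsub : S ⊆ Fintype.piFinset (fun _ : Fin d => Finset.Icc (-(L:ℤ)) (L:ℤ)) := by
    intro w hw
    rw [Fintype.mem_piFinset]
    intro m
    rw [Finset.mem_Icc]
    have := hbound w hw m
    rw [abs_le] at this
    simpa using this
  have h1 : S.card ≤ (2*L+1) ^ d := by
    calc S.card ≤ (Fintype.piFinset (fun _ : Fin d => Finset.Icc (-(L:ℤ)) (L:ℤ))).card :=
          Finset.card_le_card hsub
      _ = (2*L+1) ^ d := by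
          rw [Fintype.card_piFinset]
          simp [Int.card_Icc]
          congr 1
          omega
  calc (S.card : ℝ) ≤ ((2*L+1 : ℕ) : ℝ) ^ d := by exact_mod_cast h1
    _ = (2*(L:ℝ)+1) ^ d := by push_cast; ring

lemma poly_log_bound (M : ℕ) (hM : 1 ≤ M) (ε : ℝ) (hε : 0 < ε) (hε1 : ε ≤ 1)
    (β : ℝ) (hβ : 1/2 ≤ β) :
    ε ^ β * (1 + (-Real.log ε)) ^ M ≤ (2*(M:ℝ)+1) ^ M := by
  set y := -Real.log ε with hy
  have hy0 : 0 ≤ y := by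
    rw [hy]
    simp only [neg_nonneg]
    exact Real.log_nonpos (le_of_lt hε) hε1
  have hM1 : (1:ℝ) ≤ (M:ℝ) := by exact_mod_cast hM
  have step1 : 1 + y ≤ (2*(M:ℝ)+1) * Real.exp (y / (2*M)) := by
    have e1 : y/(2*(M:ℝ)) + 1 ≤ Real.exp (y / (2*M)) := Real.add_one_le_exp _
    have e2 : (2*(M:ℝ)+1) * (y/(2*(M:ℝ)) + 1) ≤ (2*(M:ℝ)+1) * Real.exp (y / (2*M)) := by
      apply mul_le_mul_of_nonneg_left e1 (by linarith)
    refine le_trans ?_ e2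
    have hMpos : (0:ℝ) < 2*(M:ℝ) := by linarith
    have expand : (2*(M:ℝ)+1) * (y/(2*(M:ℝ)) + 1) - (1 + y) = y/(2*(M:ℝ)) + 2*(M:ℝ) := by
      field_simp
      ring
    nlinarith [div_nonneg hy0 (le_of_lt hMpos)]
  have step2 : (1 + y) ^ M ≤ (2*(M:ℝ)+1) ^ M * Real.exp (y / 2) := by
    calc (1 + y) ^ M ≤ ((2*(M:ℝ)+1) * Real.exp (y / (2*M))) ^ M :=
          pow_le_pow_left₀ (by linarith) step1 M
      _ = (2*(M:ℝ)+1) ^ M * (Real.exp (y / (2*M))) ^ M := mul_pow _ _ _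
      _ = (2*(M:ℝ)+1) ^ M * Real.exp (y / 2) := by
          rw [← Real.exp_nat_mul]
          congr 1
          field_simp
  have step3 : ε ^ β * Real.exp (y / 2) ≤ 1 := by
    have hrw : ε ^ β = Real.exp (Real.log ε * β) := Real.rpow_def_of_pos hε β
    rw [hrw, ← Real.exp_add]
    rw [show Real.log ε * β + y / 2 = Real.log ε * (β - 1/2) by rw [hy]; ring]
    apply Real.exp_le_one_iff.2
    have hlog : Real.log ε ≤ 0 := Real.log_nonpos (le_of_lt hε) hε1
    have hb2 : 0 ≤ β - 1/2 := by linarith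
    exact mul_nonpos_of_nonpos_of_nonneg hlog hb2
  calc ε ^ β * (1 + y) ^ M
      ≤ ε ^ β * ((2*(M:ℝ)+1) ^ M * Real.exp (y / 2)) := by
        apply mul_le_mul_of_nonneg_left step2 (Real.rpow_nonneg (le_of_lt hε) β)
    _ = (2*(M:ℝ)+1) ^ M * (ε ^ β * Real.exp (y / 2)) := by ring
    _ ≤ (2*(M:ℝ)+1) ^ M * 1 := by
        apply mul_le_mul_of_nonneg_left step3 (by positivity)
    _ = (2*(M:ℝ)+1) ^ M := mul_one _

end GS11


/-- Let `d ≥ 2` and suppose a (scale-dependent) joint cumulant functional `K`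
of `n`-tuples of points of `D_ε = D/ε ∩ Z^d` satisfies the bound
`|κ(Φ(v) : v ∈ V)| ≤ C ∑_{σ ∈ S⁰_cycl(V)} ∏_v min(|v - σ(v)|^{-d}, 1)`, the sum being over
full cyclic permutations without fixed points. Then for every `n ≥ 3`,
`ε^{nd/2} ∑_{v₁,...,v_n ∈ D_ε} |κ(Φ(v_i) : i ∈ [n])| = O(ε^{(d-1)(n-2)/2})`,
which tends to `0` as `ε → 0`. -/
theorem gradient_squared_stmt11 (d n : ℕ) (hd : 2 ≤ d) (hn : 3 ≤ n)
    (D : Set (Fin d → ℝ)) (hD : Bornology.IsBounded D)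
    (K : ℝ → (Fin n → (Fin d → ℤ)) → ℝ) (C : ℝ)
    (hK : ∀ ε : ℝ, 0 < ε → ∀ V : Fin n → (Fin d → ℤ),
      |K ε V| ≤ C * ∑ σ ∈ (Finset.univ : Finset (Equiv.Perm (Fin n))).filter
          (fun σ => σ.IsCycle ∧ ∀ i, σ i ≠ i),
        ∏ i : Fin n,
          (if V i = V (σ i) then 1 else
            (Real.sqrt (∑ m, ((V i m : ℝ) - (V (σ i) m : ℝ)) ^ 2)) ^ (-(d : ℤ)))) :
    ∃ C' : ℝ, 0 < C' ∧ ∀ ε : ℝ, 0 < ε → ε ≤ 1 →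
      ∀ S : Finset (Fin d → ℤ), (∀ v ∈ S, (fun i => ε * (v i : ℝ)) ∈ D) →
        ε ^ ((n * d : ℝ) / 2) *
            ∑ V : Fin n → {x // x ∈ S}, |K ε (fun i => (V i : Fin d → ℤ))|
          ≤ C' * ε ^ (((d : ℝ) - 1) * ((n : ℝ) - 2) / 2) := by
  obtain ⟨m, rfl⟩ : ∃ m, n = m + 1 := ⟨n - 1, by omega⟩
  -- radius of D
  obtain ⟨R₀, hR₀⟩ := hD.exists_norm_le
  set R : ℝ := max R₀ 1 with hR_def
  have hR1 : (1:ℝ) ≤ R := le_max_right _ _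
  have hRb : ∀ x ∈ D, ‖x‖ ≤ R := fun x hx => le_trans (hR₀ x hx) (le_max_left _ _)
  set Cp : ℝ := max C 0 with hCp_def
  have hCp0 : 0 ≤ Cp := le_max_right _ _
  set a : ℝ := 3 + 2 * Real.log (2*R+1) with ha_def
  have ha3 : (3:ℝ) ≤ a := by
    have : 0 ≤ Real.log (2*R+1) := Real.log_nonneg (by linarith)
    linarith
  set M : ℕ := d * m with hM_def
  have hM1 : 1 ≤ M := by
    have : 2 ≤ m := by omega
    calc 1 ≤ 2 * 2 := by norm_num
      _ ≤ d * m := Nat.mul_le_mul hd this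
  set B : ℝ := 4*R+3 with hB_def
  have hB0 : (0:ℝ) < B := by linarith
  refine ⟨Cp * ((m+1).factorial) * B^d * a^M * (2*(M:ℝ)+1)^M + 1, by positivity, ?_⟩
  intro ε hε hε1 S hS
  set β : ℝ := (((m+1 : ℕ) : ℝ) - 2) / 2 with hβ_def
  have hβhalf : (1:ℝ)/2 ≤ β := by
    rw [hβ_def]
    have : (3:ℝ) ≤ ((m+1 : ℕ) : ℝ) := by exact_mod_cast hn
    linarith
  set q : ℝ := ((d:ℝ) - 1) * (((m+1 : ℕ) : ℝ) - 2) / 2 with hq_def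
  set L : ℕ := ⌈2*R/ε⌉₊ with hL_def
  have hL1 : 1 ≤ L := by
    rw [hL_def]
    rw [Nat.one_le_ceil_iff]
    positivity
  have hLle : (L:ℝ) ≤ (2*R+1)/ε := by
    have h1 : (L:ℝ) ≤ 2*R/ε + 1 := le_of_lt (Nat.ceil_lt_add_one (by positivity))
    have h2 : (1:ℝ) ≤ 1/ε := by
      rw [le_div_iff₀ hε]; linarith
    calc (L:ℝ) ≤ 2*R/ε + 1 := h1
      _ ≤ 2*R/ε + 1/ε := by linarith
      _ = (2*R+1)/ε := by ring
  -- coordinate bounds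
  have hcoord : ∀ v ∈ S, ∀ mm : Fin d, |(v mm : ℝ)| ≤ R/ε := by
    intro v hv mm
    have hx := hRb _ (hS v hv)
    have h1 : |ε * (v mm : ℝ)| ≤ R := by
      have := norm_le_pi_norm (fun i => ε * (v i : ℝ)) mm
      calc |ε * (v mm : ℝ)| = ‖(fun i => ε * (v i : ℝ)) mm‖ := rfl
        _ ≤ ‖(fun i => ε * (v i : ℝ))‖ := this
        _ ≤ R := hx
    rw [abs_mul, abs_of_pos hε] at h1
    rw [le_div_iff₀ hε]
    linarith [h1]
  have hLcoord : ∀ v ∈ S, ∀ mm : Fin d, |v mm| ≤ (L:ℤ) := by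
    intro v hv mm
    have h1 : (|v mm| : ℝ) ≤ 2*R/ε := by
      have := hcoord v hv mm
      rw [← Int.cast_abs] at this ⊢
      have h2 : R/ε ≤ 2*R/ε := by
        gcongr
        linarith
      calc ((|v mm| : ℤ) : ℝ) ≤ R/ε := by exact_mod_cast this
        _ ≤ 2*R/ε := h2
    have h3 : (|v mm| : ℝ) ≤ (L:ℝ) := le_trans h1 (Nat.le_ceil _)
    exact_mod_cast h3
  have hdiff : ∀ v ∈ S, ∀ w ∈ S, ∀ mm : Fin d, |v mm - w mm| ≤ (L:ℤ) := by
    intro v hv w hw mm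
    have h1 : ((|v mm - w mm| : ℤ) : ℝ) ≤ 2*R/ε := by
      have hv' := hcoord v hv mm
      have hw' := hcoord w hw mm
      have htri : |(v mm : ℝ) - (w mm : ℝ)| ≤ |(v mm : ℝ)| + |(w mm : ℝ)| := abs_sub _ _
      have hcst : ((|v mm - w mm| : ℤ) : ℝ) = |(v mm : ℝ) - (w mm : ℝ)| := by
        push_cast; ring_nf
      rw [hcst]
      calc |(v mm : ℝ) - (w mm : ℝ)| ≤ |(v mm : ℝ)| + |(w mm : ℝ)| := htri
        _ ≤ R/ε + R/ε := add_le_add hv' hw'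
        _ = 2*R/ε := by ring
    have h3 : ((|v mm - w mm| : ℤ) : ℝ) ≤ (L:ℝ) := le_trans h1 (Nat.le_ceil _)
    exact_mod_cast h3
  set A₁ : ℝ := ∑ t ∈ Finset.Icc (-(L:ℤ)) (L:ℤ), GS11.h t with hA₁_def
  have hA₁0 : 0 ≤ A₁ := Finset.sum_nonneg fun t _ => GS11.h_nonneg t
  set y : ℝ := -Real.log ε with hy_def
  have hy0 : 0 ≤ y := by
    rw [hy_def]
    simp only [neg_nonneg]
    exact Real.log_nonpos (le_of_lt hε) hε1
  have hA₁a : A₁ ≤ a * (1 + y) := by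
    have h1 := GS11.sum_h_le L
    have h2 := harmonic_le_one_add_log L
    have hL0 : (0:ℝ) < (L:ℝ) := by exact_mod_cast hL1
    have h3 : Real.log L ≤ Real.log ((2*R+1)/ε) := Real.log_le_log hL0 hLle
    have h4 : Real.log ((2*R+1)/ε) = Real.log (2*R+1) - Real.log ε := by
      rw [Real.log_div (by linarith) (ne_of_gt hε)]
    have h5 : 2*y ≤ a*y := mul_le_mul_of_nonneg_right (by linarith) hy0
    have h6 : A₁ ≤ 1 + 2*(harmonic L : ℝ) := by rw [hA₁_def]; exact h1
    have h7 : a * (1 + y) = a + a * y := by ring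
    rw [h7, ha_def, hy_def]
    rw [ha_def, hy_def] at h5
    linarith [h6, h2, h3, h4, h5]
  have hcard : (S.card : ℝ) ≤ (B/ε)^d := by
    have h1 := GS11.card_le S L (fun w hw => hLcoord w hw)
    have h2 : 2*(L:ℝ)+1 ≤ B/ε := by
      have h3 : (1:ℝ) ≤ 1/ε := by
        rw [le_div_iff₀ hε]; linarith
      calc 2*(L:ℝ)+1 ≤ 2*((2*R+1)/ε) + 1/ε := by linarith [hLle]
        _ = (4*R+3)/ε := by ring
      
    exact le_trans h1 (pow_le_pow_left₀ (by positivity) h2 d)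
  -- the comparison kernel on the subtype
  set G : {x // x ∈ S} → {x // x ∈ S} → ℝ :=
    fun v w => ∏ mm, GS11.h ((v : Fin d → ℤ) mm - (w : Fin d → ℤ) mm) with hG_def
  have hG0 : ∀ v w, 0 ≤ G v w := fun v w => Finset.prod_nonneg fun mm _ => GS11.h_nonneg _
  have hG1 : ∀ v w, G v w ≤ 1 := fun v w =>
    Finset.prod_le_one (fun mm _ => GS11.h_nonneg _) (fun mm _ => GS11.h_le_one _)
  have hGA : ∀ w : {x // x ∈ S}, ∑ v : {x // x ∈ S}, G v w ≤ A₁^d := by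
    intro w
    have h1 : ∀ v : {x // x ∈ S}, G v w
        = ∏ mm, GS11.h ((w : Fin d → ℤ) mm - (v : Fin d → ℤ) mm) := by
      intro v
      refine Finset.prod_congr rfl fun mm _ => ?_
      rw [← GS11.h_neg]
      congr 1
      ring
    rw [Finset.sum_congr rfl fun v _ => h1 v]
    exact GS11.rowSum S L (w : Fin d → ℤ) (fun v hv mm => hdiff _ w.2 v hv mm)
  have hAd0 : (0:ℝ) ≤ A₁^d := pow_nonneg hA₁0 d
  -- per-configuration cumulant bound
  have hKb : ∀ V : Fin (m+1) → {x // x ∈ S}, |K ε (fun i => (V i : Fin d → ℤ))|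
      ≤ Cp * ∑ σ ∈ (Finset.univ : Finset (Equiv.Perm (Fin (m+1)))).filter
          (fun σ => σ.IsCycle ∧ ∀ i, σ i ≠ i), ∏ i, G (V i) (V (σ i)) := by
    intro V
    refine le_trans (hK ε hε _) ?_
    have htnn : ∀ σ : Equiv.Perm (Fin (m+1)), ∀ i : Fin (m+1),
        (0:ℝ) ≤ (if (V i : Fin d → ℤ) = (V (σ i) : Fin d → ℤ) then 1 else
          (Real.sqrt (∑ mm, (((V i : Fin d → ℤ) mm : ℝ) - ((V (σ i) : Fin d → ℤ) mm : ℝ)) ^ 2)) ^ (-(d : ℤ))) := by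
      intro σ i
      split_ifs
      · norm_num
      · exact zpow_nonneg (Real.sqrt_nonneg _) _
    have hsum_nn : (0:ℝ) ≤ ∑ σ ∈ (Finset.univ : Finset (Equiv.Perm (Fin (m+1)))).filter
        (fun σ => σ.IsCycle ∧ ∀ i, σ i ≠ i), ∏ i : Fin (m+1),
          (if (V i : Fin d → ℤ) = (V (σ i) : Fin d → ℤ) then 1 else
            (Real.sqrt (∑ mm, (((V i : Fin d → ℤ) mm : ℝ) - ((V (σ i) : Fin d → ℤ) mm : ℝ)) ^ 2)) ^ (-(d : ℤ))) :=
      Finset.sum_nonneg fun σ _ => Finset.prod_nonneg fun i _ => htnn σ i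
    calc C * ∑ σ ∈ (Finset.univ : Finset (Equiv.Perm (Fin (m+1)))).filter
          (fun σ => σ.IsCycle ∧ ∀ i, σ i ≠ i), ∏ i : Fin (m+1),
            (if (V i : Fin d → ℤ) = (V (σ i) : Fin d → ℤ) then 1 else
              (Real.sqrt (∑ mm, (((V i : Fin d → ℤ) mm : ℝ) - ((V (σ i) : Fin d → ℤ) mm : ℝ)) ^ 2)) ^ (-(d : ℤ)))
        ≤ Cp * ∑ σ ∈ (Finset.univ : Finset (Equiv.Perm (Fin (m+1)))).filter
          (fun σ => σ.IsCycle ∧ ∀ i, σ i ≠ i), ∏ i : Fin (m+1),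
            (if (V i : Fin d → ℤ) = (V (σ i) : Fin d → ℤ) then 1 else
              (Real.sqrt (∑ mm, (((V i : Fin d → ℤ) mm : ℝ) - ((V (σ i) : Fin d → ℤ) mm : ℝ)) ^ 2)) ^ (-(d : ℤ))) :=
          mul_le_mul_of_nonneg_right (le_max_left _ _) hsum_nn
      _ ≤ Cp * ∑ σ ∈ (Finset.univ : Finset (Equiv.Perm (Fin (m+1)))).filter
          (fun σ => σ.IsCycle ∧ ∀ i, σ i ≠ i), ∏ i, G (V i) (V (σ i)) := by
          refine mul_le_mul_of_nonneg_left (Finset.sum_le_sum fun σ _ => ?_) hCp0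
          refine Finset.prod_le_prod (fun i _ => htnn σ i) (fun i _ => ?_)
          exact GS11.term_le (V i : Fin d → ℤ) (V (σ i) : Fin d → ℤ)
  have hcyc : ∀ σ ∈ (Finset.univ : Finset (Equiv.Perm (Fin (m+1)))).filter
      (fun σ => σ.IsCycle ∧ ∀ i, σ i ≠ i),
      ∑ V : Fin (m+1) → {x // x ∈ S}, ∏ i, G (V i) (V (σ i))
        ≤ (Fintype.card {x // x ∈ S}) * (A₁^d)^m := by
    intro σ hσ
    rw [Finset.mem_filter] at hσ
    exact GS11.cycleSum G (A₁^d) hG0 hG1 hGA hAd0 m σ hσ.2.1 hσ.2.2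
  have hfact : (((Finset.univ : Finset (Equiv.Perm (Fin (m+1)))).filter
      (fun σ => σ.IsCycle ∧ ∀ i, σ i ≠ i)).card : ℝ) ≤ ((m+1).factorial : ℝ) := by
    have h1 : ((Finset.univ : Finset (Equiv.Perm (Fin (m+1)))).filter
        (fun σ => σ.IsCycle ∧ ∀ i, σ i ≠ i)).card ≤ (m+1).factorial := by
      calc ((Finset.univ : Finset (Equiv.Perm (Fin (m+1)))).filter
          (fun σ => σ.IsCycle ∧ ∀ i, σ i ≠ i)).card
          ≤ (Finset.univ : Finset (Equiv.Perm (Fin (m+1)))).card := Finset.card_filter_le _ _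
        _ = (m+1).factorial := by rw [Finset.card_univ, Fintype.card_perm, Fintype.card_fin]
    exact_mod_cast h1
  have hX : (∑ V : Fin (m+1) → {x // x ∈ S}, |K ε (fun i => (V i : Fin d → ℤ))|)
      ≤ Cp * (((m+1).factorial : ℝ) * ((S.card : ℝ) * A₁^M)) := by
    have hconst_nn : (0:ℝ) ≤ (Fintype.card {x // x ∈ S}) * (A₁^d)^m := by positivity
    calc (∑ V : Fin (m+1) → {x // x ∈ S}, |K ε (fun i => (V i : Fin d → ℤ))|)
        ≤ ∑ V : Fin (m+1) → {x // x ∈ S}, Cp * ∑ σ ∈ (Finset.univ : Finset (Equiv.Perm (Fin (m+1)))).filter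
            (fun σ => σ.IsCycle ∧ ∀ i, σ i ≠ i), ∏ i, G (V i) (V (σ i)) :=
          Finset.sum_le_sum fun V _ => hKb V
      _ = Cp * ∑ σ ∈ (Finset.univ : Finset (Equiv.Perm (Fin (m+1)))).filter
            (fun σ => σ.IsCycle ∧ ∀ i, σ i ≠ i),
            ∑ V : Fin (m+1) → {x // x ∈ S}, ∏ i, G (V i) (V (σ i)) := by
          rw [← Finset.mul_sum, Finset.sum_comm]
      _ ≤ Cp * ∑ _σ ∈ (Finset.univ : Finset (Equiv.Perm (Fin (m+1)))).filter
            (fun σ => σ.IsCycle ∧ ∀ i, σ i ≠ i),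
            ((Fintype.card {x // x ∈ S}) * (A₁^d)^m : ℝ) :=
          mul_le_mul_of_nonneg_left (Finset.sum_le_sum hcyc) hCp0
      _ = Cp * ((((Finset.univ : Finset (Equiv.Perm (Fin (m+1)))).filter
            (fun σ => σ.IsCycle ∧ ∀ i, σ i ≠ i)).card : ℝ)
            * ((Fintype.card {x // x ∈ S}) * (A₁^d)^m)) := by
          rw [Finset.sum_const, nsmul_eq_mul]
      _ ≤ Cp * (((m+1).factorial : ℝ) * ((Fintype.card {x // x ∈ S}) * (A₁^d)^m)) := by
          refine mul_le_mul_of_nonneg_left (mul_le_mul_of_nonneg_right hfact hconst_nn) hCp0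
      _ = Cp * (((m+1).factorial : ℝ) * ((S.card : ℝ) * A₁^M)) := by
          rw [Fintype.card_coe, ← pow_mul, hM_def]
  -- numeric assembly
  have key1 : ε^(d:ℕ) * (S.card : ℝ) ≤ B^d := by
    calc ε^(d:ℕ) * (S.card : ℝ) ≤ ε^(d:ℕ) * (B/ε)^d :=
        mul_le_mul_of_nonneg_left hcard (pow_nonneg (le_of_lt hε) d)
      _ = (ε * (B/ε))^d := (mul_pow _ _ _).symm
      _ = B^d := by
          congr 1
          field_simp
  have key2 : ε^β * A₁^M ≤ a^M * (2*(M:ℝ)+1)^M := by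
    have h1 : A₁^M ≤ (a*(1+y))^M := pow_le_pow_left₀ hA₁0 hA₁a M
    calc ε^β * A₁^M ≤ ε^β * (a*(1+y))^M :=
        mul_le_mul_of_nonneg_left h1 (Real.rpow_nonneg (le_of_lt hε) β)
      _ = a^M * (ε^β * (1+y)^M) := by rw [mul_pow]; ring
      _ ≤ a^M * ((2*(M:ℝ)+1)^M) := by
          refine mul_le_mul_of_nonneg_left ?_ (pow_nonneg (by linarith) M)
          exact GS11.poly_log_bound M hM1 ε hε hε1 β hβhalf
  have hsplit : ε ^ ((((m+1 : ℕ) : ℝ) * (d:ℝ))/2) = ε ^ q * (ε ^ (d:ℕ) * ε ^ β) := by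
    rw [← Real.rpow_natCast ε d, ← Real.rpow_add hε, ← Real.rpow_add hε]
    congr 1
    rw [hq_def, hβ_def]
    push_cast
    ring
  have hqnn : (0:ℝ) ≤ ε ^ q := le_of_lt (Real.rpow_pos_of_pos hε q)
  calc ε ^ ((((m+1 : ℕ) : ℝ) * (d:ℝ))/2) * ∑ V : Fin (m+1) → {x // x ∈ S}, |K ε (fun i => (V i : Fin d → ℤ))|
      ≤ ε ^ ((((m+1 : ℕ) : ℝ) * (d:ℝ))/2) * (Cp * (((m+1).factorial : ℝ) * ((S.card : ℝ) * A₁^M))) := by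
        refine mul_le_mul_of_nonneg_left hX ?_
        exact le_of_lt (Real.rpow_pos_of_pos hε _)
    _ = (Cp * ((m+1).factorial : ℝ)) * ((ε^(d:ℕ) * (S.card : ℝ)) * (ε^β * A₁^M)) * ε^q := by
        rw [hsplit]; ring
    _ ≤ (Cp * ((m+1).factorial : ℝ)) * ((B^d) * (a^M * (2*(M:ℝ)+1)^M)) * ε^q := by
        refine mul_le_mul_of_nonneg_right ?_ hqnn
        refine mul_le_mul_of_nonneg_left ?_ (by positivity)
        refine mul_le_mul key1 key2 ?_ ?_
        · positivity
        · positivity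
    _ = (Cp * ((m+1).factorial : ℝ) * B^d * a^M * (2*(M:ℝ)+1)^M) * ε^q := by ring
    _ ≤ (Cp * ((m+1).factorial : ℝ) * B^d * a^M * (2*(M:ℝ)+1)^M + 1) * ε^q := by
        refine mul_le_mul_of_nonneg_right (by linarith) hqnn
end

section
/- Let k ≥ 2 and let FD₀ be the set of perfect matchings of the multiset {1,1,2,2,...,k,k} (two distinguishable copies of each label) such that no edge matches two copies with the same label. Then the map sending a matching to the permutation structure it induces on {1,...,k} surjects onto the fixed-point-free permutations whose cycle type is recorded, and the number of matchings inducing a given cycle partition into blocks B₁,...,B_q is ∏_{i=1}^q 2^{|B_i|-1} · (number of full cyclic orders on B_i). -/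
open scoped Classical

/-- The involution of `Fin k × Bool` swapping the two copies of each label. -/
def copyFlip (k : ℕ) : Equiv.Perm (Fin k × Bool) :=
  Equiv.prodCongr (Equiv.refl (Fin k)) (Function.Involutive.toPerm not Bool.not_not)

/-- The complete Feynman diagrams on the doubled label set `{1,1,...,k,k}`: perfect matchings
(fixed-point-free involutions of `Fin k × Bool`) such that no edge joins two copies of the
same label. -/
noncomputable def feynmanDiagrams (k : ℕ) : Finset (Equiv.Perm (Fin k × Bool)) :=
  Finset.univ.filter fun M => (∀ x, M (M x) = x) ∧ ∀ x, (M x).1 ≠ x.1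

/-- The matching `M` induces the partition `π` of the labels: the blocks of `π` are exactly
the label-components of the union of closed cycles traced out by `M` (following the matching
and then switching to the other copy of the matched label). -/
def inducesPartition (k : ℕ) (M : Equiv.Perm (Fin k × Bool))
    (π : Finpartition (Finset.univ : Finset (Fin k))) : Prop :=
  ∀ j j' : Fin k, j' ∈ π.part j ↔
    ∃ m : ℕ, (((M.trans (copyFlip k)) ^ m) (j, false)).1 = j'

namespace Stmt19

open Finset Equiv Equiv.Perm

variable {k : ℕ}

lemma copyFlip_apply (x : Fin k × Bool) : copyFlip k x = (x.1, !x.2) := rfl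

lemma copyFlip_copyFlip (x : Fin k × Bool) : copyFlip k (copyFlip k x) = x := by
  simp [copyFlip_apply]

lemma copyFlip_mul_self : copyFlip k * copyFlip k = 1 :=
  Equiv.ext fun x => copyFlip_copyFlip x

lemma copyFlip_inv : (copyFlip k)⁻¹ = copyFlip k :=
  inv_eq_of_mul_eq_one_right copyFlip_mul_self

/-! ### partition representatives -/

variable (π : Finpartition (Finset.univ : Finset (Fin k)))

noncomputable def rep (j : Fin k) : Fin k :=
  (π.part j).min' ⟨j, π.mem_part (Finset.mem_univ j)⟩

lemma min'_congr {α : Type*} [LinearOrder α] {s t : Finset α} (h : s = t) (hs : s.Nonempty) :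
    s.min' hs = t.min' (h ▸ hs) := by subst h; rfl

lemma rep_mem_part (j : Fin k) : rep π j ∈ π.part j := Finset.min'_mem _ _

lemma part_eq_of_mem_part {j j' : Fin k} (h : j' ∈ π.part j) : π.part j' = π.part j :=
  π.part_eq_of_mem (π.part_mem.2 (Finset.mem_univ j)) h

lemma rep_eq_of_mem_part {j j' : Fin k} (h : j' ∈ π.part j) : rep π j' = rep π j :=
  min'_congr (part_eq_of_mem_part π h) _

lemma part_rep (j : Fin k) : π.part (rep π j) = π.part j :=
  part_eq_of_mem_part π (rep_mem_part π j)

lemma mem_part_rep (j : Fin k) : j ∈ π.part (rep π j) := by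
  rw [part_rep]; exact π.mem_part (Finset.mem_univ j)

lemma rep_rep (j : Fin k) : rep π (rep π j) = rep π j :=
  rep_eq_of_mem_part π (rep_mem_part π j)

/-! ### the cycle-tracing permutation -/

def TT (k : ℕ) (M : Equiv.Perm (Fin k × Bool)) : Equiv.Perm (Fin k × Bool) :=
  M.trans (copyFlip k)

variable {M : Equiv.Perm (Fin k × Bool)}

lemma TT_eq (M : Equiv.Perm (Fin k × Bool)) : TT k M = copyFlip k * M := rfl

lemma TT_apply (x : Fin k × Bool) : TT k M x = ((M x).1, !(M x).2) := rfl

lemma inducesPartition_iff : inducesPartition k M π ↔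
    ∀ j j' : Fin k, j' ∈ π.part j ↔ ∃ m : ℕ, (((TT k M) ^ m) (j, false)).1 = j' := Iff.rfl

lemma FD_inv (hM : M ∈ feynmanDiagrams k) : ∀ x, M (M x) = x :=
  ((Finset.mem_filter.1 hM).2).1

lemma FD_lab (hM : M ∈ feynmanDiagrams k) : ∀ x, (M x).1 ≠ x.1 :=
  ((Finset.mem_filter.1 hM).2).2

lemma M_inv_eq (hM : M ∈ feynmanDiagrams k) : M⁻¹ = M :=
  inv_eq_of_mul_eq_one_right (Equiv.ext fun x => FD_inv hM x)

lemma TT_conj (hM : M ∈ feynmanDiagrams k) (i : ℤ) :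
    copyFlip k * (TT k M) ^ i * copyFlip k = (TT k M) ^ (-i) := by
  have h1 : copyFlip k * TT k M * (copyFlip k)⁻¹ = (TT k M)⁻¹ := by
    rw [TT_eq, copyFlip_inv, mul_inv_rev, ← mul_assoc, copyFlip_mul_self,
      one_mul, M_inv_eq hM, copyFlip_inv]
  calc copyFlip k * (TT k M) ^ i * copyFlip k
      = copyFlip k * (TT k M) ^ i * (copyFlip k)⁻¹ := by rw [copyFlip_inv]
    _ = (copyFlip k * TT k M * (copyFlip k)⁻¹) ^ i := by rw [conj_zpow]
    _ = ((TT k M)⁻¹) ^ i := by rw [h1]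
    _ = (TT k M) ^ (-i) := by rw [inv_zpow, zpow_neg]

lemma TT_conj_apply (hM : M ∈ feynmanDiagrams k) (i : ℤ) (x : Fin k × Bool) :
    copyFlip k (((TT k M) ^ i) (copyFlip k x)) = ((TT k M) ^ (-i)) x := by
  have := Equiv.ext_iff.1 (TT_conj hM i) x
  simpa [Equiv.Perm.mul_apply] using this

lemma no_flip (hM : M ∈ feynmanDiagrams k) (i : ℤ) (x : Fin k × Bool) :
    ((TT k M) ^ i) x ≠ copyFlip k x := by
  intro h
  rcases Int.even_or_odd i with ⟨t, ht⟩ | ⟨t, ht⟩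
  · have key : copyFlip k (((TT k M) ^ t) x) = ((TT k M) ^ t) x := by
      have h1 := TT_conj_apply hM t (copyFlip k x)
      rw [copyFlip_copyFlip] at h1
      rw [h1, ← h, ← Equiv.Perm.mul_apply, ← zpow_add]
      congr 2
      omega
    have := congrArg Prod.snd key
    simp [copyFlip_apply] at this
  · have hMT : ∀ y, M y = copyFlip k (TT k M y) := by
      intro y; rw [TT_apply, copyFlip_apply]; simp
    have key : M (((TT k M) ^ t) x) = ((TT k M) ^ t) x := by
      have h2 : TT k M (((TT k M) ^ t) x) = ((TT k M) ^ (t + 1)) x := by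
        rw [← Equiv.Perm.mul_apply, ← zpow_one_add]; congr 2; omega
      have h1 := TT_conj_apply hM (t + 1) (copyFlip k x)
      rw [copyFlip_copyFlip] at h1
      rw [hMT, h2, h1, ← h, ← Equiv.Perm.mul_apply, ← zpow_add]
      congr 2
      omega
    exact FD_lab hM _ (congrArg Prod.fst key)

lemma zpow_exists_nat {β : Type*} [Fintype β] [DecidableEq β] (g : Equiv.Perm β) (i : ℤ) :
    ∃ m : ℕ, g ^ i = g ^ m := by
  refine ⟨(i % (orderOf g : ℤ)).toNat, ?_⟩
  have hpos : 0 < orderOf g := orderOf_pos g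
  have hnn : 0 ≤ i % (orderOf g : ℤ) := Int.emod_nonneg _ (by exact_mod_cast hpos.ne')
  rw [← zpow_natCast, Int.toNat_of_nonneg hnn, zpow_mod_orderOf]

/-! ### the canonical section -/

noncomputable def epsOf (M : Equiv.Perm (Fin k × Bool))
    (π : Finpartition (Finset.univ : Finset (Fin k))) (j : Fin k) : Bool :=
  if ∃ m : ℕ, ((TT k M) ^ m) (rep π j, false) = (j, false) then false else true

lemma eps_exists (hM : M ∈ feynmanDiagrams k) (hind : inducesPartition k M π) (j : Fin k) :
    ∃ m : ℕ, ((TT k M) ^ m) (rep π j, false) = (j, epsOf M π j) := by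
  obtain ⟨m, hm⟩ := (hind (rep π j) j).1 (mem_part_rep π j)
  by_cases h : ∃ m : ℕ, ((TT k M) ^ m) (rep π j, false) = (j, false)
  · rw [epsOf, if_pos h]; exact h
  · rw [epsOf, if_neg h]
    refine ⟨m, ?_⟩
    have heq : ((TT k M) ^ m) (rep π j, false)
        = (j, (((TT k M) ^ m) (rep π j, false)).2) := Prod.ext hm rfl
    cases hb : (((TT k M) ^ m) (rep π j, false)).2
    · exact absurd ⟨m, by rw [heq, hb]⟩ h
    · rw [heq, hb]

lemma eps_unique (hM : M ∈ feynmanDiagrams k) (hind : inducesPartition k M π) {j : Fin k}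
    {b : Bool} (i : ℤ) (h : ((TT k M) ^ i) (rep π j, false) = (j, b)) : b = epsOf M π j := by
  obtain ⟨m, hm⟩ := eps_exists π hM hind j
  by_contra hne
  have hb : b = !(epsOf M π j) := by
    cases b <;> cases he : epsOf M π j <;> simp_all
  have key : ((TT k M) ^ (i - m)) (((TT k M) ^ (m : ℤ)) (rep π j, false))
      = copyFlip k (((TT k M) ^ (m : ℤ)) (rep π j, false)) := by
    rw [← Equiv.Perm.mul_apply, ← zpow_add]
    have : i - (m : ℤ) + m = i := by ring
    rw [this, h, zpow_natCast, hm, copyFlip_apply, hb]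
  exact no_flip hM _ _ key

lemma eps_rep (hM : M ∈ feynmanDiagrams k) (hind : inducesPartition k M π) (j : Fin k) :
    epsOf M π (rep π j) = false := by
  have h0 : ((TT k M) ^ (0 : ℤ)) (rep π (rep π j), false) = (rep π j, false) := by
    rw [rep_rep]; simp
  exact (eps_unique π hM hind 0 h0).symm

lemma eps_zpow (hM : M ∈ feynmanDiagrams k) (hind : inducesPartition k M π) (i : ℤ)
    (j : Fin k) : ((TT k M) ^ i) (j, epsOf M π j)
      = ((((TT k M) ^ i) (j, epsOf M π j)).1,
          epsOf M π ((((TT k M) ^ i) (j, epsOf M π j)).1)) := by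
  obtain ⟨m, hm⟩ := eps_exists π hM hind j
  set y := ((TT k M) ^ i) (j, epsOf M π j) with hy
  have h1 : ((TT k M) ^ (i + m)) (rep π j, false) = y := by
    rw [zpow_add, Equiv.Perm.mul_apply, zpow_natCast, hm]
  obtain ⟨m', hm'⟩ := zpow_exists_nat (TT k M) (i + m)
  have h2 : ((TT k M) ^ (m' : ℕ)) (rep π j, false) = y := by rw [← hm', h1]
  have hind' : ∀ a a' : Fin k, a' ∈ π.part a ↔
      ∃ m : ℕ, (((TT k M) ^ m) (a, false)).1 = a' := hind
  have hy1 : y.1 ∈ π.part (rep π j) := (hind' _ _).2 ⟨m', by rw [h2]⟩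
  have hrep : rep π y.1 = rep π j := (rep_eq_of_mem_part π hy1).trans (rep_rep π j)
  have h3 : y.2 = epsOf M π y.1 := by
    refine eps_unique π hM hind (i + m) ?_
    rw [hrep, h1]
  exact Prod.ext rfl h3

/-! ### the label permutation induced by a diagram -/

noncomputable def sigmaFun (M : Equiv.Perm (Fin k × Bool))
    (π : Finpartition (Finset.univ : Finset (Fin k))) : Fin k → Fin k :=
  fun j => (M (j, epsOf M π j)).1

noncomputable def sigmaInvFun (M : Equiv.Perm (Fin k × Bool))
    (π : Finpartition (Finset.univ : Finset (Fin k))) : Fin k → Fin k :=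
  fun j => (M (j, !epsOf M π j)).1

lemma M_eps (hM : M ∈ feynmanDiagrams k) (hind : inducesPartition k M π) (j : Fin k) :
    M (j, epsOf M π j) = (sigmaFun M π j, !epsOf M π (sigmaFun M π j)) := by
  have h := eps_zpow π hM hind 1 j
  rw [zpow_one] at h
  have hMx : M (j, epsOf M π j) = copyFlip k (TT k M (j, epsOf M π j)) := by
    rw [TT_apply, copyFlip_apply]; simp
  have hfst : (TT k M (j, epsOf M π j)).1 = sigmaFun M π j := rfl
  rw [hMx, h, copyFlip_apply, hfst]

lemma M_neps (hM : M ∈ feynmanDiagrams k) (hind : inducesPartition k M π) (j : Fin k) :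
    M (j, !epsOf M π j) = (sigmaInvFun M π j, epsOf M π (sigmaInvFun M π j)) := by
  have h := eps_zpow π hM hind (-1) j
  rw [zpow_neg, zpow_one] at h
  have hTinv : (TT k M)⁻¹ (j, epsOf M π j) = M (j, !epsOf M π j) := by
    rw [Equiv.Perm.inv_eq_iff_eq, TT_apply]
    have : M (M (j, !epsOf M π j)) = (j, !epsOf M π j) := FD_inv hM _
    rw [this]; simp
  rw [hTinv] at h
  have hfst : (M (j, !epsOf M π j)).1 = sigmaInvFun M π j := rfl
  rw [h, hfst]

lemma sigma_left (hM : M ∈ feynmanDiagrams k) (hind : inducesPartition k M π) (j : Fin k) :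
    sigmaInvFun M π (sigmaFun M π j) = j := by
  have h1 := M_eps π hM hind j
  have h2 : M (sigmaFun M π j, !epsOf M π (sigmaFun M π j)) = (j, epsOf M π j) := by
    rw [← h1, FD_inv hM]
  simp only [sigmaInvFun, h2]

lemma sigma_right (hM : M ∈ feynmanDiagrams k) (hind : inducesPartition k M π) (j : Fin k) :
    sigmaFun M π (sigmaInvFun M π j) = j := by
  have h1 := M_neps π hM hind j
  have h2 : M (sigmaInvFun M π j, epsOf M π (sigmaInvFun M π j)) = (j, !epsOf M π j) := by
    rw [← h1, FD_inv hM]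
  simp only [sigmaFun, h2]

noncomputable def sigmaOf (M : Equiv.Perm (Fin k × Bool))
    (π : Finpartition (Finset.univ : Finset (Fin k))) : Equiv.Perm (Fin k) :=
  if h : Function.Bijective (sigmaFun M π) then Equiv.ofBijective _ h else 1

lemma sigmaOf_apply (hM : M ∈ feynmanDiagrams k) (hind : inducesPartition k M π) (j : Fin k) :
    sigmaOf M π j = sigmaFun M π j := by
  have hb : Function.Bijective (sigmaFun M π) :=
    ⟨Function.LeftInverse.injective (g := sigmaInvFun M π) (sigma_left π hM hind),
      fun j => ⟨sigmaInvFun M π j, sigma_right π hM hind j⟩⟩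
  rw [sigmaOf, dif_pos hb]; rfl

lemma sigmaOf_inv_apply (hM : M ∈ feynmanDiagrams k) (hind : inducesPartition k M π)
    (j : Fin k) : (sigmaOf M π)⁻¹ j = sigmaInvFun M π j := by
  rw [Equiv.Perm.inv_eq_iff_eq, sigmaOf_apply π hM hind, sigma_right π hM hind]

lemma T_pow_eps (hM : M ∈ feynmanDiagrams k) (hind : inducesPartition k M π) (m : ℕ)
    (j : Fin k) : ((TT k M) ^ m) (j, epsOf M π j)
      = (((sigmaOf M π) ^ m) j, epsOf M π (((sigmaOf M π) ^ m) j)) := by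
  induction m with
  | zero => simp
  | succ n ih =>
    rw [pow_succ', Equiv.Perm.mul_apply, ih]
    have hstep : TT k M (((sigmaOf M π) ^ n) j, epsOf M π (((sigmaOf M π) ^ n) j))
        = (sigmaFun M π (((sigmaOf M π) ^ n) j),
            epsOf M π (sigmaFun M π (((sigmaOf M π) ^ n) j))) := by
      rw [TT_apply, M_eps π hM hind]
      simp
    rw [hstep, pow_succ', Equiv.Perm.mul_apply, sigmaOf_apply π hM hind]

lemma T_pow_neps (hM : M ∈ feynmanDiagrams k) (hind : inducesPartition k M π) (m : ℕ)
    (j : Fin k) : ((TT k M) ^ m) (j, !epsOf M π j)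
      = ((((sigmaOf M π)⁻¹) ^ m) j, !epsOf M π ((((sigmaOf M π)⁻¹) ^ m) j)) := by
  induction m with
  | zero => simp
  | succ n ih =>
    rw [pow_succ', Equiv.Perm.mul_apply, ih]
    have hstep : TT k M ((((sigmaOf M π)⁻¹) ^ n) j, !epsOf M π ((((sigmaOf M π)⁻¹) ^ n) j))
        = (sigmaInvFun M π ((((sigmaOf M π)⁻¹) ^ n) j),
            !epsOf M π (sigmaInvFun M π ((((sigmaOf M π)⁻¹) ^ n) j))) := by
      rw [TT_apply, M_neps π hM hind]
    rw [hstep, pow_succ', Equiv.Perm.mul_apply, sigmaOf_inv_apply π hM hind]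

lemma exists_fst_iff {T : Equiv.Perm (Fin k × Bool)} {σ : Equiv.Perm (Fin k)} {j : Fin k}
    (h : (∀ m : ℕ, ((T ^ m) (j, false)).1 = (σ ^ m) j) ∨
      (∀ m : ℕ, ((T ^ m) (j, false)).1 = ((σ⁻¹) ^ m) j)) (j' : Fin k) :
    (∃ m : ℕ, ((T ^ m) (j, false)).1 = j') ↔ σ.SameCycle j j' := by
  have main : ∀ τ : Equiv.Perm (Fin k), (∀ m : ℕ, ((T ^ m) (j, false)).1 = (τ ^ m) j) →
      ((∃ m : ℕ, ((T ^ m) (j, false)).1 = j') ↔ τ.SameCycle j j') := by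
    intro τ hτ
    constructor
    · rintro ⟨m, hm⟩
      exact ⟨m, by rw [zpow_natCast, ← hτ m, hm]⟩
    · intro hs
      obtain ⟨i, _, hi⟩ := hs.exists_pow_eq'
      exact ⟨i, by rw [hτ i, hi]⟩
  rcases h with h | h
  · exact main σ h
  · rw [← Equiv.Perm.sameCycle_inv]
    exact main σ⁻¹ h

lemma sigmaOf_good (hM : M ∈ feynmanDiagrams k) (hind : inducesPartition k M π)
    (j j' : Fin k) : j' ∈ π.part j ↔ (sigmaOf M π).SameCycle j j' := by
  have hind' : ∀ a a' : Fin k, a' ∈ π.part a ↔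
      ∃ m : ℕ, (((TT k M) ^ m) (a, false)).1 = a' := hind
  rw [hind' j j']
  apply exists_fst_iff (σ := sigmaOf M π)
  cases heps : epsOf M π j
  · left; intro m
    have h := T_pow_eps π hM hind m j
    rw [heps] at h
    rw [h]
  · right; intro m
    have h := T_pow_neps π hM hind m j
    rw [heps] at h
    simp only [Bool.not_true] at h
    rw [h]

/-! ### constructing a diagram from a permutation and a section -/

def matchFun (σ : Equiv.Perm (Fin k)) (ε : Fin k → Bool) : Fin k × Bool → Fin k × Bool :=
  fun x => if x.2 = ε x.1 then (σ x.1, !ε (σ x.1)) else (σ⁻¹ x.1, ε (σ⁻¹ x.1))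

lemma matchFun_involutive (σ : Equiv.Perm (Fin k)) (ε : Fin k → Bool) :
    Function.Involutive (matchFun σ ε) := by
  rintro ⟨j, b⟩
  by_cases h : b = ε j
  · subst h
    simp [matchFun]
  · have hb : b = !ε j := by cases b <;> cases he : ε j <;> simp_all
    subst hb
    simp [matchFun]

noncomputable def matchOf (σ : Equiv.Perm (Fin k)) (ε : Fin k → Bool) :
    Equiv.Perm (Fin k × Bool) :=
  Function.Involutive.toPerm _ (matchFun_involutive σ ε)

lemma matchOf_apply (σ : Equiv.Perm (Fin k)) (ε : Fin k → Bool) (x : Fin k × Bool) :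
    matchOf σ ε x = matchFun σ ε x := rfl

lemma fpf_of_good1 (hπ : ∀ B ∈ π.parts, 2 ≤ B.card) {σ : Equiv.Perm (Fin k)}
    (h1 : ∀ j j' : Fin k, j' ∈ π.part j ↔ σ.SameCycle j j') (j : Fin k) : σ j ≠ j := by
  intro hj
  obtain ⟨j', hj', hne⟩ := Finset.exists_mem_ne
    (lt_of_lt_of_le one_lt_two (hπ _ (π.part_mem.2 (Finset.mem_univ j)))) j
  obtain ⟨i, hi⟩ := (h1 j j').1 hj'
  rw [Equiv.Perm.zpow_apply_eq_self_of_apply_eq_self hj i] at hi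
  exact hne hi.symm

lemma matchOf_mem (hπ : ∀ B ∈ π.parts, 2 ≤ B.card) {σ : Equiv.Perm (Fin k)} {ε : Fin k → Bool}
    (h1 : ∀ j j' : Fin k, j' ∈ π.part j ↔ σ.SameCycle j j') :
    matchOf σ ε ∈ feynmanDiagrams k := by
  simp only [feynmanDiagrams, Finset.mem_filter, Finset.mem_univ, true_and]
  refine ⟨fun x => matchFun_involutive σ ε x, ?_⟩
  rintro ⟨j, b⟩
  have hfpf := fpf_of_good1 π hπ h1
  have hinv : σ⁻¹ j ≠ j := fun hc => hfpf j (by conv_lhs => rw [← hc, ← Equiv.Perm.mul_apply, mul_inv_cancel, Equiv.Perm.one_apply])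
  by_cases h : b = ε j <;> simp [matchOf_apply, matchFun, h]
  · exact hfpf j
  · exact hinv

lemma TT_matchOf₁ (σ : Equiv.Perm (Fin k)) (ε : Fin k → Bool) (j : Fin k) :
    TT k (matchOf σ ε) (j, ε j) = (σ j, ε (σ j)) := by
  rw [TT_apply, matchOf_apply]
  simp [matchFun]

lemma TT_matchOf₂ (σ : Equiv.Perm (Fin k)) (ε : Fin k → Bool) (j : Fin k) :
    TT k (matchOf σ ε) (j, !ε j) = (σ⁻¹ j, !ε (σ⁻¹ j)) := by
  rw [TT_apply, matchOf_apply]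
  simp [matchFun]

lemma TT_matchOf_pow₁ (σ : Equiv.Perm (Fin k)) (ε : Fin k → Bool) (m : ℕ) (j : Fin k) :
    ((TT k (matchOf σ ε)) ^ m) (j, ε j) = ((σ ^ m) j, ε ((σ ^ m) j)) := by
  induction m with
  | zero => simp
  | succ n ih =>
    rw [pow_succ', Equiv.Perm.mul_apply, ih, TT_matchOf₁, pow_succ', Equiv.Perm.mul_apply]

lemma TT_matchOf_pow₂ (σ : Equiv.Perm (Fin k)) (ε : Fin k → Bool) (m : ℕ) (j : Fin k) :
    ((TT k (matchOf σ ε)) ^ m) (j, !ε j) = (((σ⁻¹) ^ m) j, !ε (((σ⁻¹) ^ m) j)) := by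
  induction m with
  | zero => simp
  | succ n ih =>
    rw [pow_succ', Equiv.Perm.mul_apply, ih, TT_matchOf₂, pow_succ', Equiv.Perm.mul_apply]

lemma matchOf_induces {σ : Equiv.Perm (Fin k)} {ε : Fin k → Bool}
    (h1 : ∀ j j' : Fin k, j' ∈ π.part j ↔ σ.SameCycle j j') :
    inducesPartition k (matchOf σ ε) π := by
  rw [inducesPartition_iff]
  intro j j'
  rw [h1 j j']
  refine (exists_fst_iff (σ := σ) ?_ j').symm
  cases hε : ε j
  · left; intro m
    have h := TT_matchOf_pow₁ σ ε m j
    rw [hε] at h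
    rw [h]
  · right; intro m
    have h := TT_matchOf_pow₂ σ ε m j
    rw [hε] at h
    simp only [Bool.not_true] at h
    rw [h]

/-! ### round trips -/

lemma eps_matchOf (hπ : ∀ B ∈ π.parts, 2 ≤ B.card) {σ : Equiv.Perm (Fin k)} {ε : Fin k → Bool}
    (h1 : ∀ j j' : Fin k, j' ∈ π.part j ↔ σ.SameCycle j j')
    (h2 : ∀ j : Fin k, ε (rep π j) = false) (j : Fin k) :
    epsOf (matchOf σ ε) π j = ε j := by
  have hM := matchOf_mem π hπ (ε := ε) h1
  have hind := matchOf_induces π (ε := ε) h1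
  have hjr : σ.SameCycle (rep π j) j := (h1 (rep π j) j).1 (mem_part_rep π j)
  obtain ⟨i, _, hi⟩ := hjr.exists_pow_eq'
  have hw : ((TT k (matchOf σ ε)) ^ i) (rep π j, false) = (j, ε j) := by
    have h0 : (rep π j, false) = (rep π j, ε (rep π j)) := by rw [h2 j]
    rw [h0, TT_matchOf_pow₁, hi]
  exact (eps_unique π hM hind (i : ℤ) (by rw [zpow_natCast]; exact hw)).symm

lemma sigmaOf_matchOf (hπ : ∀ B ∈ π.parts, 2 ≤ B.card) {σ : Equiv.Perm (Fin k)}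
    {ε : Fin k → Bool} (h1 : ∀ j j' : Fin k, j' ∈ π.part j ↔ σ.SameCycle j j')
    (h2 : ∀ j : Fin k, ε (rep π j) = false) :
    sigmaOf (matchOf σ ε) π = σ := by
  have hM := matchOf_mem π hπ (ε := ε) h1
  have hind := matchOf_induces π (ε := ε) h1
  apply Equiv.ext
  intro j
  rw [sigmaOf_apply π hM hind]
  show (matchOf σ ε (j, epsOf (matchOf σ ε) π j)).1 = σ j
  rw [eps_matchOf π hπ h1 h2, matchOf_apply]
  simp [matchFun]

lemma matchOf_sigmaOf (hM : M ∈ feynmanDiagrams k) (hind : inducesPartition k M π) :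
    matchOf (sigmaOf M π) (epsOf M π) = M := by
  apply Equiv.ext
  rintro ⟨j, b⟩
  show matchFun (sigmaOf M π) (epsOf M π) (j, b) = M (j, b)
  by_cases h : b = epsOf M π j
  · subst h
    rw [M_eps π hM hind]
    simp only [matchFun, if_pos rfl]
    rw [sigmaOf_apply π hM hind]
    simp
  · have hb : b = !epsOf M π j := by cases b <;> cases he : epsOf M π j <;> simp_all
    subst hb
    rw [M_neps π hM hind]
    have hcond : (!epsOf M π j) ≠ epsOf M π j := Bool.not_ne_self _
    simp only [matchFun, if_neg hcond]
    rw [sigmaOf_inv_apply π hM hind]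

/-! ### the main card bijection -/

lemma cardA (hπ : ∀ B ∈ π.parts, 2 ≤ B.card) :
    ((feynmanDiagrams k).filter (fun M => inducesPartition k M π)).card
      = ((Finset.univ.filter fun σ : Equiv.Perm (Fin k) =>
            ∀ j j' : Fin k, j' ∈ π.part j ↔ σ.SameCycle j j') ×ˢ
          (Finset.univ.filter fun ε : Fin k → Bool =>
            ∀ j : Fin k, ε (rep π j) = false)).card := by
  refine Finset.card_bij' (fun M _ => (sigmaOf M π, epsOf M π))
    (fun p _ => matchOf p.1 p.2) ?_ ?_ ?_ ?_
  · intro M hM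
    obtain ⟨hMF, hMi⟩ := Finset.mem_filter.1 hM
    rw [Finset.mem_product]
    constructor
    · rw [Finset.mem_filter]
      exact ⟨Finset.mem_univ _, sigmaOf_good π hMF hMi⟩
    · rw [Finset.mem_filter]
      exact ⟨Finset.mem_univ _, fun j => eps_rep π hMF hMi j⟩
  · rintro ⟨σ, ε⟩ hp
    rw [Finset.mem_product] at hp
    obtain ⟨hσ, hε⟩ := hp
    have h1 := (Finset.mem_filter.1 hσ).2
    rw [Finset.mem_filter]
    exact ⟨matchOf_mem π hπ h1, matchOf_induces π h1⟩
  · intro M hM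
    obtain ⟨hMF, hMi⟩ := Finset.mem_filter.1 hM
    exact matchOf_sigmaOf π hMF hMi
  · rintro ⟨σ, ε⟩ hp
    rw [Finset.mem_product] at hp
    obtain ⟨hσ, hε⟩ := hp
    have h1 := (Finset.mem_filter.1 hσ).2
    have h2 := (Finset.mem_filter.1 hε).2
    exact Prod.ext (sigmaOf_matchOf π hπ h1 h2) (funext fun j => eps_matchOf π hπ h1 h2 j)

/-! ### combining cycles on the blocks -/

lemma g_congr (g : ∀ B ∈ π.parts, Equiv.Perm (Fin k)) {B B' : Finset (Fin k)} (h : B = B')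
    (hB : B ∈ π.parts) : g B hB = g B' (h ▸ hB) := by subst h; rfl

noncomputable def combineFun (g : ∀ B ∈ π.parts, Equiv.Perm (Fin k)) : Fin k → Fin k :=
  fun j => g (π.part j) (π.part_mem.2 (Finset.mem_univ j)) j

variable {g : ∀ B ∈ π.parts, Equiv.Perm (Fin k)}

lemma combineFun_mem_part (hg : ∀ B hB, (g B hB).support = B) (j : Fin k) :
    combineFun π g j ∈ π.part j := by
  have h1 : j ∈ (g (π.part j) (π.part_mem.2 (Finset.mem_univ j))).support := by
    rw [hg]; exact π.mem_part (Finset.mem_univ j)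
  have h2 := Equiv.Perm.apply_mem_support.2 h1
  rwa [hg] at h2

lemma combineFun_part_eq (hg : ∀ B hB, (g B hB).support = B) (j : Fin k) :
    π.part (combineFun π g j) = π.part j :=
  part_eq_of_mem_part π (combineFun_mem_part π hg j)

lemma combineFun_left (hg : ∀ B hB, (g B hB).support = B) (j : Fin k) :
    combineFun π (fun B hB => (g B hB)⁻¹) (combineFun π g j) = j := by
  have hpart := combineFun_part_eq π hg j
  show (g (π.part (combineFun π g j)) (π.part_mem.2 (Finset.mem_univ _)))⁻¹
      (combineFun π g j) = j
  rw [g_congr π g hpart]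
  show (g (π.part j) _)⁻¹ ((g (π.part j) _) j) = j
  exact Equiv.symm_apply_apply _ _

lemma combineFun_right (hg : ∀ B hB, (g B hB).support = B) (j : Fin k) :
    combineFun π g (combineFun π (fun B hB => (g B hB)⁻¹) j) = j := by
  have hg' : ∀ B hB, ((fun B hB => (g B hB)⁻¹) B hB).support = B := by
    intro B hB
    simp only [Equiv.Perm.support_inv]
    exact hg B hB
  have h := combineFun_left π hg' j
  simpa only [inv_inv] using h

noncomputable def combine (g : ∀ B ∈ π.parts, Equiv.Perm (Fin k)) : Equiv.Perm (Fin k) :=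
  if h : Function.Bijective (combineFun π g) then Equiv.ofBijective _ h else 1

lemma combine_apply (hg : ∀ B hB, (g B hB).support = B) (j : Fin k) :
    combine π g j = combineFun π g j := by
  have hb : Function.Bijective (combineFun π g) :=
    ⟨Function.LeftInverse.injective (g := combineFun π (fun B hB => (g B hB)⁻¹))
      (combineFun_left π hg),
      fun j => ⟨combineFun π (fun B hB => (g B hB)⁻¹) j, combineFun_right π hg j⟩⟩
  rw [combine, dif_pos hb]; rfl

lemma combine_pow (hg : ∀ B hB, (g B hB).support = B) (m : ℕ) {j : Fin k}
    {B : Finset (Fin k)} (hB : B ∈ π.parts) (hj : j ∈ B) :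
    ((combine π g) ^ m) j = ((g B hB) ^ m) j ∧ ((g B hB) ^ m) j ∈ B := by
  induction m with
  | zero => exact ⟨by simp, by simpa using hj⟩
  | succ n ih =>
    obtain ⟨ih1, ih2⟩ := ih
    have hyB : ((g B hB) ^ n) j ∈ B := ih2
    have hpart : π.part (((g B hB) ^ n) j) = B := π.part_eq_of_mem hB hyB
    constructor
    · rw [pow_succ', Equiv.Perm.mul_apply, ih1, combine_apply π hg]
      show g (π.part (((g B hB) ^ n) j)) _ _ = _
      rw [g_congr π g hpart]
      rw [pow_succ', Equiv.Perm.mul_apply]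
    · rw [pow_succ', Equiv.Perm.mul_apply]
      have : ((g B hB) ^ n) j ∈ (g B hB).support := by rw [hg]; exact hyB
      have h2 := Equiv.Perm.apply_mem_support.2 this
      rwa [hg] at h2

lemma combine_good1 (hg : ∀ B hB, (g B hB).support = B)
    (hc : ∀ B hB, (g B hB).IsCycle) (j j' : Fin k) :
    j' ∈ π.part j ↔ (combine π g).SameCycle j j' := by
  have hBmem : π.part j ∈ π.parts := π.part_mem.2 (Finset.mem_univ j)
  have hjB : j ∈ π.part j := π.mem_part (Finset.mem_univ j)
  constructor
  · intro hj'
    have hcyc := hc (π.part j) hBmem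
    have hx : (g (π.part j) hBmem) j ≠ j := by
      rw [← Equiv.Perm.mem_support, hg]; exact hjB
    have hy : (g (π.part j) hBmem) j' ≠ j' := by
      rw [← Equiv.Perm.mem_support, hg]; exact hj'
    obtain ⟨i, hi⟩ := hcyc.exists_pow_eq hx hy
    refine ⟨i, ?_⟩
    rw [zpow_natCast, (combine_pow π hg i hBmem hjB).1, hi]
  · intro hs
    obtain ⟨i, _, hi⟩ := hs.exists_pow_eq'
    rw [← hi, (combine_pow π hg i hBmem hjB).1]
    exact (combine_pow π hg i hBmem hjB).2

lemma cycleOf_min_spec (hπ : ∀ B ∈ π.parts, 2 ≤ B.card) {σ : Equiv.Perm (Fin k)}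
    (hσ : ∀ j j' : Fin k, j' ∈ π.part j ↔ σ.SameCycle j j') {B : Finset (Fin k)}
    (hB : B ∈ π.parts) :
    (σ.cycleOf (B.min' (π.nonempty_of_mem_parts hB))).IsCycle ∧
      (σ.cycleOf (B.min' (π.nonempty_of_mem_parts hB))).support = B := by
  set m := B.min' (π.nonempty_of_mem_parts hB) with hm
  have hmB : m ∈ B := Finset.min'_mem _ _
  have hpart : π.part m = B := π.part_eq_of_mem hB hmB
  have hfpf := fpf_of_good1 π hπ hσ
  refine ⟨Equiv.Perm.isCycle_cycleOf σ (hfpf m), ?_⟩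
  ext y
  rw [Equiv.Perm.mem_support_cycleOf_iff]
  constructor
  · rintro ⟨hsc, -⟩
    rw [← hpart]
    exact (hσ m y).2 hsc
  · intro hy
    refine ⟨(hσ m y).1 (by rwa [hpart]), ?_⟩
    exact Equiv.Perm.mem_support.2 (hfpf m)

lemma cardSigma (hπ : ∀ B ∈ π.parts, 2 ≤ B.card) :
    (Finset.univ.filter fun σ : Equiv.Perm (Fin k) =>
        ∀ j j' : Fin k, j' ∈ π.part j ↔ σ.SameCycle j j').card
      = ∏ B ∈ π.parts, (Finset.univ.filter fun σ : Equiv.Perm (Fin k) =>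
          σ.IsCycle ∧ σ.support = B).card := by
  rw [← Finset.card_pi]
  refine Finset.card_bij'
    (fun σ _ => fun B hB => σ.cycleOf (B.min' (π.nonempty_of_mem_parts hB)))
    (fun g _ => combine π g) ?_ ?_ ?_ ?_
  · intro σ hσ
    have h1 := (Finset.mem_filter.1 hσ).2
    rw [Finset.mem_pi]
    intro B hB
    rw [Finset.mem_filter]
    exact ⟨Finset.mem_univ _, cycleOf_min_spec π hπ h1 hB⟩
  · intro g hg
    rw [Finset.mem_pi] at hg
    have hgs : ∀ B hB, (g B hB).support = B := fun B hB =>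
      ((Finset.mem_filter.1 (hg B hB)).2).2
    have hgc : ∀ B hB, (g B hB).IsCycle := fun B hB =>
      ((Finset.mem_filter.1 (hg B hB)).2).1
    rw [Finset.mem_filter]
    exact ⟨Finset.mem_univ _, combine_good1 π hgs hgc⟩
  · intro σ hσ
    have h1 := (Finset.mem_filter.1 hσ).2
    have hgs : ∀ B hB, ((fun B (hB : B ∈ π.parts) =>
        σ.cycleOf (B.min' (π.nonempty_of_mem_parts hB))) B hB).support = B :=
      fun B hB => (cycleOf_min_spec π hπ h1 hB).2
    apply Equiv.ext
    intro j
    rw [combine_apply π hgs]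
    show σ.cycleOf ((π.part j).min' _) j = σ j
    have hmin : (π.part j).min' (π.nonempty_of_mem_parts (π.part_mem.2 (Finset.mem_univ j)))
        ∈ π.part j := Finset.min'_mem _ _
    have hsc : σ.SameCycle ((π.part j).min'
        (π.nonempty_of_mem_parts (π.part_mem.2 (Finset.mem_univ j)))) j := by
      apply (h1 _ j).1
      rw [part_eq_of_mem_part π hmin]
      exact π.mem_part (Finset.mem_univ j)
    exact hsc.cycleOf_apply
  · intro g hg
    rw [Finset.mem_pi] at hg
    have hgs : ∀ B hB, (g B hB).support = B := fun B hB =>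
      ((Finset.mem_filter.1 (hg B hB)).2).2
    have hgc : ∀ B hB, (g B hB).IsCycle := fun B hB =>
      ((Finset.mem_filter.1 (hg B hB)).2).1
    funext B hB
    set m := B.min' (π.nonempty_of_mem_parts hB) with hmdef
    have hmB : m ∈ B := Finset.min'_mem _ _
    have hpartm : π.part m = B := π.part_eq_of_mem hB hmB
    apply Equiv.ext
    intro y
    by_cases hy : y ∈ B
    · have hsc : (combine π g).SameCycle m y :=
        (combine_good1 π hgs hgc m y).1 (by rwa [hpartm])
      rw [hsc.cycleOf_apply, combine_apply π hgs]
      show g (π.part y) _ y = g B hB y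
      have hparty : π.part y = B := π.part_eq_of_mem hB hy
      rw [g_congr π g hparty]
    · have hnsc : ¬ (combine π g).SameCycle m y := by
        intro hsc
        exact hy (by rw [← hpartm]; exact (combine_good1 π hgs hgc m y).2 hsc)
      rw [Equiv.Perm.cycleOf_apply, if_neg hnsc]
      have : y ∉ (g B hB).support := by rw [hgs]; exact hy
      exact (Equiv.Perm.notMem_support.1 this).symm

/-! ### counting the sections -/

noncomputable def minset (π : Finpartition (Finset.univ : Finset (Fin k))) : Finset (Fin k) :=
  Finset.univ.image (rep π)

lemma rep_of_mem_minset {x : Fin k} (hx : x ∈ minset π) : rep π x = x := by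
  obtain ⟨j, -, rfl⟩ := Finset.mem_image.1 hx
  exact rep_rep π j

lemma rep_mem_minset (j : Fin k) : rep π j ∈ minset π :=
  Finset.mem_image.2 ⟨j, Finset.mem_univ j, rfl⟩

lemma card_minset : (minset π).card = π.parts.card := by
  refine Finset.card_bij (fun x _ => π.part x) ?_ ?_ ?_
  · intro x _
    exact π.part_mem.2 (Finset.mem_univ x)
  · intro x hx x' hx' hpp
    have h1 : x = rep π x := (rep_of_mem_minset π hx).symm
    have h2 : x' = rep π x' := (rep_of_mem_minset π hx').symm
    rw [h1, h2]
    show (π.part x).min' _ = (π.part x').min' _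
    exact min'_congr hpp _
  · intro B hB
    obtain ⟨j, hj⟩ := π.nonempty_of_mem_parts hB
    have hpart : π.part j = B := π.part_eq_of_mem hB hj
    refine ⟨rep π j, rep_mem_minset π j, ?_⟩
    show π.part (rep π j) = B
    rw [part_rep, hpart]

lemma cardEps :
    (Finset.univ.filter fun ε : Fin k → Bool => ∀ j : Fin k, ε (rep π j) = false).card
      = 2 ^ (k - π.parts.card) := by
  have hbij : (Finset.univ.filter fun ε : Fin k → Bool =>
      ∀ j : Fin k, ε (rep π j) = false).card
        = ((Finset.univ \ minset π).powerset).card := by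
    refine Finset.card_bij' (fun ε _ => Finset.univ.filter fun j => ε j = true)
      (fun t _ => fun j => decide (j ∈ t)) ?_ ?_ ?_ ?_
    · intro ε hε
      have hε2 := (Finset.mem_filter.1 hε).2
      rw [Finset.mem_powerset]
      intro j hj
      have hjt : ε j = true := (Finset.mem_filter.1 hj).2
      rw [Finset.mem_sdiff]
      refine ⟨Finset.mem_univ _, fun hjm => ?_⟩
      have := hε2 j
      rw [rep_of_mem_minset π hjm] at this
      rw [this] at hjt
      exact Bool.false_ne_true hjt
    · intro t ht
      rw [Finset.mem_powerset] at ht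
      rw [Finset.mem_filter]
      refine ⟨Finset.mem_univ _, fun j => ?_⟩
      have : rep π j ∉ t := fun hc => by
        have := Finset.mem_sdiff.1 (ht hc)
        exact this.2 (rep_mem_minset π j)
      simp [this]
    · intro ε _
      funext j
      by_cases h : ε j = true <;> simp [h]
    · intro t _
      ext j
      simp
  rw [hbij, Finset.card_powerset, Finset.card_sdiff_of_subset (Finset.subset_univ _), card_minset]
  congr 2
  simp

lemma prod_two_pow (hπ : ∀ B ∈ π.parts, 2 ≤ B.card) :
    ∏ B ∈ π.parts, 2 ^ (B.card - 1) = 2 ^ (k - π.parts.card) := by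
  rw [Finset.prod_pow_eq_pow_sum]
  congr 1
  have h1 : ∑ B ∈ π.parts, B.card = k := by
    rw [π.sum_card_parts]
    simp
  have h2 : ∑ B ∈ π.parts, (B.card - 1) = (∑ B ∈ π.parts, B.card) - ∑ B ∈ π.parts, 1 := by
    apply Finset.sum_tsub_distrib
    intro B hB
    have := hπ B hB
    omega
  rw [h2, h1, Finset.sum_const, smul_eq_mul, mul_one]

end Stmt19

/-- For `k ≥ 2`, every partition `π` of `{1,...,k}` into blocks of size at
least 2 is induced by some complete Feynman diagram (so the induced cycle structures exhaust
the fixed-point-free permutation cycle types), and the number of diagrams inducing `π` is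
`∏_{B ∈ π} 2^{|B|-1} · #(full cyclic orders on B)`. -/
theorem gradient_squared_stmt19 (k : ℕ) (hk : 2 ≤ k)
    (π : Finpartition (Finset.univ : Finset (Fin k)))
    (hπ : ∀ B ∈ π.parts, 2 ≤ B.card) :
    (∃ M ∈ feynmanDiagrams k, inducesPartition k M π) ∧
      ((feynmanDiagrams k).filter (fun M => inducesPartition k M π)).card
        = ∏ B ∈ π.parts, 2 ^ (B.card - 1) *
            ((Finset.univ : Finset (Equiv.Perm (Fin k))).filter
              (fun σ => σ.IsCycle ∧ σ.support = B)).card := by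
  classical
  open Stmt19 in
  constructor
  · -- existence
    set g₀ : ∀ B ∈ π.parts, Equiv.Perm (Fin k) :=
      fun B _ => B.toList.formPerm with hg₀def
    have hlen : ∀ B (hB : B ∈ π.parts), 2 ≤ B.toList.length := by
      intro B hB
      rw [Finset.length_toList]
      exact hπ B hB
    have hg₀c : ∀ B hB, (g₀ B hB).IsCycle := fun B hB =>
      List.isCycle_formPerm B.nodup_toList (hlen B hB)
    have hg₀s : ∀ B hB, (g₀ B hB).support = B := by
      intro B hB
      have hne : ∀ x : Fin k, B.toList ≠ [x] := by
        intro x hx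
        have := hlen B hB
        rw [hx] at this
        simp at this
      rw [List.support_formPerm_of_nodup _ B.nodup_toList hne, Finset.toList_toFinset]
    have h1 := combine_good1 π hg₀s hg₀c
    have h2 : ∀ j : Fin k, (fun _ : Fin k => false) (rep π j) = false := fun _ => rfl
    exact ⟨matchOf (combine π g₀) (fun _ => false), matchOf_mem π hπ h1,
      matchOf_induces π h1⟩
  · rw [cardA π hπ, Finset.card_product, cardSigma π hπ, cardEps π,
      Finset.prod_mul_distrib, ← prod_two_pow π hπ, mul_comm]
end
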